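/- If a first-order formula φ(x, w̄ₙ) is invariant with respect to asimulations, then φ is logically equivalent to a standard x-translation of an intuitionistic predicate formula. -/

import Mathlib

namespace IPC

/-- The classical vocabulary Σ: binary R, binary E, and for each intuitionistic
`n`-ary predicate letter indexed by `m` a classical `(n+1)`-ary letter `P n m`. -/
inductive Sym : Type
  | R : Sym
  | E : Sym
  | P : ℕ → ℕ → Sym
  deriving DecidableEq

def Sym.arity : Sym → ℕ
  | .R => 2
  | .E => 2
  | .P n _ => n + 1

theorem Sym.arity_pos (s : Sym) : 0 < s.arity := by
  cases s <;> simp [Sym.arity]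

/-- A first-order model for the vocabulary Σ. -/
structure Model : Type 1 where
  D : Type
  ne : Nonempty D
  rel : ∀ s : Sym, (Fin s.arity → D) → Prop

/-- First-order formulas (with identity) over Σ; variables are natural numbers. -/
inductive Fml : Type
  | atom (s : Sym) (args : Fin s.arity → ℕ)
  | eq (v w : ℕ)
  | fls
  | neg (φ : Fml)
  | conj (φ ψ : Fml)
  | disj (φ ψ : Fml)
  | impl (φ ψ : Fml)
  | all (v : ℕ) (φ : Fml)
  | ex (v : ℕ) (φ : Fml)

/-- Tarskian satisfaction relative to a variable assignment. -/
def Fml.eval (M : Model) : Fml → (ℕ → M.D) → Prop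
  | .atom s args, f => M.rel s (fun i => f (args i))
  | .eq v w, f => f v = f w
  | .fls, _ => False
  | .neg φ, f => ¬ φ.eval M f
  | .conj φ ψ, f => φ.eval M f ∧ ψ.eval M f
  | .disj φ ψ, f => φ.eval M f ∨ ψ.eval M f
  | .impl φ ψ, f => φ.eval M f → ψ.eval M f
  | .all v φ, f => ∀ d : M.D, φ.eval M (Function.update f v d)
  | .ex v φ, f => ∃ d : M.D, φ.eval M (Function.update f v d)

/-- Degree: maximal nesting of quantifiers. -/
def Fml.deg : Fml → ℕ
  | .atom _ _ => 0
  | .eq _ _ => 0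
  | .fls => 0
  | .neg φ => φ.deg
  | .conj φ ψ => max φ.deg ψ.deg
  | .disj φ ψ => max φ.deg ψ.deg
  | .impl φ ψ => max φ.deg ψ.deg
  | .all _ φ => φ.deg + 1
  | .ex _ φ => φ.deg + 1

/-- Free variables. -/
def Fml.free : Fml → Finset ℕ
  | .atom _ args => Finset.univ.image args
  | .eq v w => {v, w}
  | .fls => ∅
  | .neg φ => φ.free
  | .conj φ ψ => φ.free ∪ ψ.free
  | .disj φ ψ => φ.free ∪ ψ.free
  | .impl φ ψ => φ.free ∪ ψ.free
  | .all v φ => φ.free.erase v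
  | .ex v φ => φ.free.erase v

/-- All variables occurring (free or bound). -/
def Fml.vars : Fml → Finset ℕ
  | .atom _ args => Finset.univ.image args
  | .eq v w => {v, w}
  | .fls => ∅
  | .neg φ => φ.vars
  | .conj φ ψ => φ.vars ∪ ψ.vars
  | .disj φ ψ => φ.vars ∪ ψ.vars
  | .impl φ ψ => φ.vars ∪ ψ.vars
  | .all v φ => insert v φ.vars
  | .ex v φ => insert v φ.vars

/-- Predicate symbols occurring in a formula. -/
def Fml.syms : Fml → Finset Sym
  | .atom s _ => {s}
  | .eq _ _ => ∅
  | .fls => ∅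
  | .neg φ => φ.syms
  | .conj φ ψ => φ.syms ∪ ψ.syms
  | .disj φ ψ => φ.syms ∪ ψ.syms
  | .impl φ ψ => φ.syms ∪ ψ.syms
  | .all _ φ => φ.syms
  | .ex _ φ => φ.syms

/-- Σ_φ : the symbols of φ together with R and E. -/
def sigOf (φ : Fml) : Finset Sym := φ.syms ∪ {Sym.R, Sym.E}

/-- Logical equivalence. -/
def FmlEquiv (φ ψ : Fml) : Prop :=
  ∀ (M : Model) (f : ℕ → M.D), φ.eval M f ↔ ψ.eval M f

/-- Logical consequence between single formulas. -/
def EntailsF (φ ψ : Fml) : Prop :=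
  ∀ (M : Model) (f : ℕ → M.D), φ.eval M f → ψ.eval M f

/-- Logical consequence from a set of formulas. -/
def EntailsSet (Γ : Set Fml) (φ : Fml) : Prop :=
  ∀ (M : Model) (f : ℕ → M.D), (∀ ψ ∈ Γ, ψ.eval M f) → φ.eval M f

def Satisfiable (φ : Fml) : Prop := ∃ (M : Model) (f : ℕ → M.D), φ.eval M f

/-- Intuitionistic predicate formulas (without identity); an `n`-ary letter
indexed by `m` takes `n` object variables. -/
inductive IFml : Type
  | atom (n m : ℕ) (args : Fin n → ℕ)
  | fls
  | conj (i j : IFml)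
  | disj (i j : IFml)
  | impl (i j : IFml)
  | all (v : ℕ) (i : IFml)
  | ex (v : ℕ) (i : IFml)

/-- Standard x-translation.  Object variables `v` of intuitionistic formulas are
represented as the even classical variables `2*v`; world variables are odd, and
a fresh world variable for a binder under world variable `x` is `x+2`. -/
def ST : IFml → ℕ → Fml
  | .atom n m args, x => .atom (.P n m) (Fin.cons x (fun i => 2 * args i))
  | .fls, x => .neg (.eq x x)
  | .conj i j, x => .conj (ST i x) (ST j x)
  | .disj i j, x => .disj (ST i x) (ST j x)
  | .impl i j, x =>
      .all (x + 2) (.impl (.atom .R ![x, x + 2]) (.impl (ST i (x + 2)) (ST j (x + 2))))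
  | .ex w i, x => .ex (2 * w) (.conj (.atom .E ![x, 2 * w]) (ST i x))
  | .all w i, x =>
      .all (x + 2) (.all (2 * w)
        (.impl (.conj (.atom .R ![x, x + 2]) (.atom .E ![x + 2, 2 * w])) (ST i (x + 2))))

/-- `ψ` is a standard x-translation (with x the fixed variable 1). -/
def IsSTF (ψ : Fml) : Prop := ∃ i : IFml, ψ = ST i 1

/-- Truth of `φ(x, w̄ₙ)` at the n-ary evaluation point `(M, a, b̄ₙ)`:
true under every assignment sending `x` (variable 1) to `a` and `wᵢ`
(variable `2*i`) to `bᵢ`. -/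
def Sat (M : Model) (a : M.D) (bs : List M.D) (φ : Fml) : Prop :=
  ∀ f : ℕ → M.D, f 1 = a → (∀ i : Fin bs.length, f (2 * i.val) = bs.get i) → φ.eval M f

/-- Free variables of φ are among x, w₁, …, wₙ. -/
def FreeOK (n : ℕ) (φ : Fml) : Prop :=
  ∀ v ∈ φ.free, v = 1 ∨ ∃ i < n, v = 2 * i

def relR (α : Model) (a b : α.D) : Prop := α.rel .R ![a, b]
def relE (α : Model) (a b : α.D) : Prop := α.rel .E ![a, b]

/-- Truth of the atom `P(x, w̄_l)` at `(α, a, ō_l)`. -/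
def atomSat (α : Model) (P : Sym) (a : α.D) (os : List α.D) : Prop :=
  ∃ h : P.arity = os.length + 1, α.rel P (fun i => (a :: os).get (Fin.cast h i))

/-- The model named by a side: `true ↦ M`, `false ↦ N`. -/
def side (M N : Model) : Bool → Model
  | true => M
  | false => N

/-- `⟨(M,a,b̄ₙ),(N,c,d̄ₙ)⟩_k`-asimulation conditions (without the condition on the
distinguished points).  The relation `A` relates tuples `(w̄_m, a'; ō_l)` over one
of the two models to similar tuples over one of the two models. -/
structure IsKAsim (Θ : Set Sym) (M N : Model) (n k : ℕ)
    (A : ∀ s t : Bool, List (side M N s).D → (side M N s).D → List (side M N s).D →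
          List (side M N t).D → (side M N t).D → List (side M N t).D → Prop) : Prop where
  lengths : ∀ s t ws a' os ws' c' os', A s t ws a' os ws' c' os' →
      ws.length = ws'.length ∧ os.length = os'.length
  atoms : ∀ s t ws a' os ws' c' os', A s t ws a' os ws' c' os' →
      ∀ P ∈ Θ, P ≠ Sym.R → P ≠ Sym.E →
        atomSat (side M N s) P a' os → atomSat (side M N t) P c' os'
  back : ∀ s t ws a' os ws' c' os', A s t ws a' os ws' c' os' →
      ws.length + os.length < n + k →
      ∀ c'', relR (side M N t) c' c'' →
        ∃ a'', relR (side M N s) a' a'' ∧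
          A t s (ws' ++ [c']) c'' os' (ws ++ [a']) a'' os ∧
          A s t (ws ++ [a']) a'' os (ws' ++ [c']) c'' os'
  exi : ∀ s t ws a' os ws' c' os', A s t ws a' os ws' c' os' →
      ws.length + os.length < n + k →
      ∀ b'', relE (side M N s) a' b'' →
        ∃ d'', relE (side M N t) c' d'' ∧
          A s t ws a' (os ++ [b'']) ws' c' (os' ++ [d''])
  uni : ∀ s t ws a' os ws' c' os', A s t ws a' os ws' c' os' →
      ws.length + os.length + 1 < n + k →
      ∀ c'' d'', relR (side M N t) c' c'' → relE (side M N t) c'' d'' →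
        ∃ a'' b'', relR (side M N s) a' a'' ∧ relE (side M N s) a'' b'' ∧
          A s t (ws ++ [a']) a'' (os ++ [b'']) (ws' ++ [c']) c'' (os' ++ [d''])

/-- (Unparametrized) asimulation conditions. -/
structure IsAsim (Θ : Set Sym) (M N : Model)
    (A : ∀ s t : Bool, (side M N s).D → List (side M N s).D →
          (side M N t).D → List (side M N t).D → Prop) : Prop where
  lengths : ∀ s t a' os c' os', A s t a' os c' os' → os.length = os'.length
  atoms : ∀ s t a' os c' os', A s t a' os c' os' →
      ∀ P ∈ Θ, P ≠ Sym.R → P ≠ Sym.E →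
        atomSat (side M N s) P a' os → atomSat (side M N t) P c' os'
  back : ∀ s t a' os c' os', A s t a' os c' os' →
      ∀ c'', relR (side M N t) c' c'' →
        ∃ a'', relR (side M N s) a' a'' ∧ A t s c'' os' a'' os ∧ A s t a'' os c'' os'
  exi : ∀ s t a' os c' os', A s t a' os c' os' →
      ∀ b'', relE (side M N s) a' b'' →
        ∃ d'', relE (side M N t) c' d'' ∧ A s t a' (os ++ [b'']) c' (os' ++ [d''])
  uni : ∀ s t a' os c' os', A s t a' os c' os' →
      ∀ c'' d'', relR (side M N t) c' c'' → relE (side M N t) c'' d'' →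
        ∃ a'' b'', relR (side M N s) a' a'' ∧ relE (side M N s) a'' b'' ∧
          A s t a'' (os ++ [b'']) c'' (os' ++ [d''])

/-- Invariance with respect to k-asimulations (for formulas `φ(x, w̄ₙ)`). -/
def KInvariant (φ : Fml) (n k : ℕ) : Prop :=
  ∀ (Θ : Set Sym), ↑(sigOf φ) ⊆ Θ →
    ∀ (M N : Model) (a : M.D) (bs : List M.D) (c : N.D) (ds : List N.D),
      bs.length = n → ds.length = n →
      (∃ A, IsKAsim Θ M N n k A ∧ A true false [] a bs [] c ds) →
      Sat M a bs φ → Sat N c ds φ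

/-- Invariance with respect to asimulations. -/
def AsimInvariant (φ : Fml) (n : ℕ) : Prop :=
  ∀ (Θ : Set Sym), ↑(sigOf φ) ⊆ Θ →
    ∀ (M N : Model) (a : M.D) (bs : List M.D) (c : N.D) (ds : List N.D),
      bs.length = n → ds.length = n →
      (∃ A, IsAsim Θ M N A ∧ A true false a bs c ds) →
      Sat M a bs φ → Sat N c ds φ

def conjList : List Fml → Fml
  | [] => .neg .fls
  | φ :: l => .conj φ (conjList l)

def disjList : List Fml → Fml
  | [] => .fls
  | φ :: l => .disj φ (disjList l)

/-- A `(Σ_φ, (x, w̄ₙ), k)`-formula that is a standard x-translation. -/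
def GoodFml (φ : Fml) (n k : ℕ) (ψ : Fml) : Prop :=
  ψ.syms ⊆ sigOf φ ∧ FreeOK n ψ ∧ ψ.deg ≤ k ∧ IsSTF ψ

/-- A complete `(φ, (x, w̄ₙ), k)`-conjunction, given by its list of conjuncts. -/
def CompleteConj (φ : Fml) (n k : ℕ) (L : List Fml) : Prop :=
  (∀ ψ ∈ L, GoodFml φ n k ψ) ∧
  ∃ (M : Model) (a : M.D) (bs : List M.D), bs.length = n ∧
    Sat M a bs (conjList L) ∧ Sat M a bs φ ∧
    ∀ ψ : Fml, GoodFml φ n k ψ → Sat M a bs ψ → EntailsF (conjList L) ψ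

/-- All Θ-formulas that are standard x-translations of intuitionistic formulas
true at `(α, a, ōₗ)` are true at `(β, c, d̄ₗ)`. -/
def ITLe (Θ : Set Sym) (α : Model) (a : α.D) (os : List α.D)
    (β : Model) (c : β.D) (ds : List β.D) : Prop :=
  ∀ i : IFml, ↑(ST i 1).syms ⊆ Θ → FreeOK os.length (ST i 1) →
    Sat α a os (ST i 1) → Sat β c ds (ST i 1)

/-- ω-saturation: every type over finitely many parameters (the values of the
assignment `f` on the finite set `W`) in finitely many variables (`V`) that is
finitely satisfiable in `M` is realized in `M`. -/
def OmegaSaturated (M : Model) : Prop :=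
  ∀ (f : ℕ → M.D) (V W : Finset ℕ) (Γ : Set Fml),
    (∀ ψ ∈ Γ, ↑ψ.free ⊆ (↑(V ∪ W) : Set ℕ)) →
    (∀ Γ' : Finset Fml, ↑Γ' ⊆ Γ →
      ∃ g : ℕ → M.D, (∀ v ∉ V, g v = f v) ∧ ∀ ψ ∈ Γ', ψ.eval M g) →
    ∃ g : ℕ → M.D, (∀ v ∉ V, g v = f v) ∧ ∀ ψ ∈ Γ, ψ.eval M g

/-- The intuitionistic consequences of φ: Σ_φ-formulas in the variables
x, w̄ₙ that are standard x-translations and follow from φ. -/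
def IC (φ : Fml) (n : ℕ) : Set Fml :=
  {ψ | ψ.syms ⊆ sigOf φ ∧ FreeOK n ψ ∧ IsSTF ψ ∧ EntailsF φ ψ}

/-! K-relative notions. -/

def KSatisfiable (K : Set Model) (Γ : Set Fml) : Prop :=
  ∃ M ∈ K, ∃ f : ℕ → M.D, ∀ ψ ∈ Γ, ψ.eval M f

def KEntails (K : Set Model) (φ ψ : Fml) : Prop := ¬ KSatisfiable K {φ, ψ.neg}

def KEquiv (K : Set Model) (φ ψ : Fml) : Prop := KEntails K φ ψ ∧ KEntails K ψ φ

def KAsimInvariant (K : Set Model) (φ : Fml) (n : ℕ) : Prop :=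
  ∀ (Θ : Set Sym), ↑(sigOf φ) ⊆ Θ →
    ∀ (M N : Model), M ∈ K → N ∈ K →
      ∀ (a : M.D) (bs : List M.D) (c : N.D) (ds : List N.D),
        bs.length = n → ds.length = n →
        (∃ A, IsAsim Θ M N A ∧ A true false a bs c ds) →
        Sat M a bs φ → Sat N c ds φ

end IPC
namespace IPC

open Classical in
/-- Canonical assignment: variable 1 ↦ a, variable 2k ↦ os[k], default elsewhere. -/
noncomputable def canon (α : Model) (a : α.D) (os : List α.D) : ℕ → α.D :=
  fun v =>
    if v = 1 then a
    else if h : v % 2 = 0 ∧ v / 2 < os.length then os.get ⟨v / 2, h.2⟩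
    else Classical.choice α.ne

lemma canon_one (α : Model) (a : α.D) (os : List α.D) : canon α a os 1 = a := by
  simp [canon]

lemma canon_two_mul (α : Model) (a : α.D) (os : List α.D) (k : Fin os.length) :
    canon α a os (2 * k.val) = os.get k := by
  have h1 : (2 * k.val) ≠ 1 := by omega
  have h2 : (2 * k.val) % 2 = 0 := by omega
  have h3 : (2 * k.val) / 2 = k.val := by omega
  simp only [canon, h1, if_false]
  rw [dif_pos ⟨h2, by omega⟩]
  congr 1
  exact Fin.ext (by simpa using h3)

lemma canon_even_indep (α : Model) (a a' : α.D) (os : List α.D) (v : ℕ) (hv : v ≠ 1) :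
    canon α a os v = canon α a' os v := by
  simp [canon, hv]

lemma canon_update_one (α : Model) (a a' : α.D) (os : List α.D) :
    Function.update (canon α a os) 1 a' = canon α a' os := by
  funext v
  rcases eq_or_ne v 1 with rfl | hv
  · simp [canon]
  · rw [Function.update_of_ne hv]; exact canon_even_indep α a a' os v hv

lemma canon_append (α : Model) (a : α.D) (os : List α.D) (b : α.D) :
    canon α a (os ++ [b]) = Function.update (canon α a os) (2 * os.length) b := by
  funext v
  rcases eq_or_ne v (2 * os.length) with rfl | hv
  · rw [Function.update_self]
    have h1 : (2 * os.length) ≠ 1 := by omega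
    simp only [canon, h1, if_false]
    rw [dif_pos ⟨by omega, by simp⟩]
    have h4 : (2 * os.length) / 2 = os.length := by omega
    simp only [List.get_eq_getElem]
    rw [List.getElem_append_right (by omega)]
    simp [h4]
  · rw [Function.update_of_ne hv]
    rcases eq_or_ne v 1 with rfl | h1
    · simp [canon]
    · simp only [canon, h1, if_false]
      by_cases h2 : v % 2 = 0 ∧ v / 2 < os.length
      · rw [dif_pos ⟨h2.1, by simp; omega⟩, dif_pos h2]
        simp only [List.get_eq_getElem]
        rw [List.getElem_append_left]
      · have h3 : ¬ (v % 2 = 0 ∧ v / 2 < (os ++ [b]).length) := by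
          simp only [List.length_append, List.length_singleton]
          rintro ⟨he, hl⟩
          exact h2 ⟨he, by omega⟩
        rw [dif_neg h3, dif_neg h2]

/-- Coincidence: evaluation depends only on values over free variables. -/
lemma eval_congr (α : Model) : ∀ (φ : Fml) (f g : ℕ → α.D),
    (∀ v ∈ φ.free, f v = g v) → (φ.eval α f ↔ φ.eval α g) := by
  intro φ
  induction φ with
  | atom s args =>
    intro f g h
    have : (fun i => f (args i)) = (fun i => g (args i)) := by
      funext i; exact h _ (by simp [Fml.free])
    simp [Fml.eval, this]
  | eq v w =>
    intro f g h
    have h1 := h v (by simp [Fml.free])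
    have h2 := h w (by simp [Fml.free])
    simp [Fml.eval, h1, h2]
  | fls => intro f g h; simp [Fml.eval]
  | neg φ ih => intro f g h; simp [Fml.eval]; rw [ih f g h]
  | conj φ ψ ih1 ih2 =>
    intro f g h
    simp only [Fml.eval]
    rw [ih1 f g (fun v hv => h v (by simp [Fml.free, hv])),
        ih2 f g (fun v hv => h v (by simp [Fml.free, hv]))]
  | disj φ ψ ih1 ih2 =>
    intro f g h
    simp only [Fml.eval]
    rw [ih1 f g (fun v hv => h v (by simp [Fml.free, hv])),
        ih2 f g (fun v hv => h v (by simp [Fml.free, hv]))]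
  | impl φ ψ ih1 ih2 =>
    intro f g h
    simp only [Fml.eval]
    rw [ih1 f g (fun v hv => h v (by simp [Fml.free, hv])),
        ih2 f g (fun v hv => h v (by simp [Fml.free, hv]))]
  | all v φ ih =>
    intro f g h
    simp only [Fml.eval]
    constructor <;> intro hh d <;> [rw [← ih _ _ ?_]; rw [ih _ _ ?_]] <;>
      first
        | exact hh d
        | (intro w hw
           rcases eq_or_ne w v with rfl | hne
           · simp [Function.update_self]
           · rw [Function.update_of_ne hne, Function.update_of_ne hne]
             exact h w (by simp [Fml.free, Finset.mem_erase, hne, hw]))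
  | ex v φ ih =>
    intro f g h
    simp only [Fml.eval]
    constructor <;> rintro ⟨d, hd⟩ <;> refine ⟨d, ?_⟩ <;> [rw [← ih _ _ ?_]; rw [ih _ _ ?_]] <;>
      first
        | exact hd
        | (intro w hw
           rcases eq_or_ne w v with rfl | hne
           · simp [Function.update_self]
           · rw [Function.update_of_ne hne, Function.update_of_ne hne]
             exact h w (by simp [Fml.free, Finset.mem_erase, hne, hw]))

/-- Free variables within {1} ∪ evens below 2l. -/
lemma sat_iff_eval_canon (α : Model) (a : α.D) (os : List α.D) (ψ : Fml)
    (hf : FreeOK os.length ψ) :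
    Sat α a os ψ ↔ ψ.eval α (canon α a os) := by
  constructor
  · intro h
    exact h (canon α a os) (canon_one α a os) (fun k => canon_two_mul α a os k)
  · intro h f hf1 hf2
    rw [eval_congr α ψ f (canon α a os) ?_]
    · exact h
    intro v hv
    rcases hf v hv with rfl | ⟨k, hk, rfl⟩
    · rw [hf1, canon_one]
    · rw [hf2 ⟨k, hk⟩]
      exact (canon_two_mul α a os ⟨k, hk⟩).symm

end IPC
namespace IPC

def itrue : IFml := .impl .fls .fls
def iconjL : List IFml → IFml := List.foldr .conj itrue
def idisjL : List IFml → IFml := List.foldr .disj .fls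

lemma mem_image_fin2 (x y v : ℕ) : v ∈ Finset.image ![x, y] Finset.univ ↔ v = x ∨ v = y := by
  simp only [Finset.mem_image, Finset.mem_univ, true_and]
  constructor
  · rintro ⟨i, rfl⟩; fin_cases i <;> simp
  · rintro (rfl | rfl)
    · exact ⟨0, rfl⟩
    · exact ⟨1, rfl⟩

lemma evalST_fls (α : Model) (x : ℕ) (f : ℕ → α.D) : (ST .fls x).eval α f ↔ False := by
  simp [ST, Fml.eval]

lemma evalST_itrue (α : Model) (x : ℕ) (f : ℕ → α.D) : (ST itrue x).eval α f := by
  simp [itrue, ST, Fml.eval]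

lemma evalST_iconjL (α : Model) (L : List IFml) (x : ℕ) (f : ℕ → α.D) :
    (ST (iconjL L) x).eval α f ↔ ∀ j ∈ L, (ST j x).eval α f := by
  induction L with
  | nil => simpa [iconjL] using evalST_itrue α x f
  | cons j L ih =>
    simp only [iconjL, List.foldr_cons, ST, Fml.eval, List.mem_cons]
    rw [show List.foldr IFml.conj itrue L = iconjL L from rfl] at *
    constructor
    · rintro ⟨h1, h2⟩ j' (rfl | hj')
      · exact h1
      · exact (ih.1 h2) j' hj'
    · intro h
      exact ⟨h j (Or.inl rfl), ih.2 (fun j' hj' => h j' (Or.inr hj'))⟩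

lemma evalST_idisjL (α : Model) (L : List IFml) (x : ℕ) (f : ℕ → α.D) :
    (ST (idisjL L) x).eval α f ↔ ∃ j ∈ L, (ST j x).eval α f := by
  induction L with
  | nil => simp [idisjL, evalST_fls]
  | cons j L ih =>
    simp only [idisjL, List.foldr_cons, ST, Fml.eval, List.mem_cons]
    rw [show List.foldr IFml.disj .fls L = idisjL L from rfl] at *
    rw [ih]
    constructor
    · rintro (h | ⟨j', hj', h⟩)
      · exact ⟨j, Or.inl rfl, h⟩
      · exact ⟨j', Or.inr hj', h⟩
    · rintro ⟨j', (rfl | hj'), h⟩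
      · exact Or.inl h
      · exact Or.inr ⟨j', hj', h⟩

lemma symsST_indep : ∀ (i : IFml) (x y : ℕ), (ST i x).syms = (ST i y).syms := by
  intro i
  induction i with
  | atom n m args => intro x y; simp [ST, Fml.syms]
  | fls => intro x y; simp [ST, Fml.syms]
  | conj i j ih1 ih2 => intro x y; simp [ST, Fml.syms, ih1 x y, ih2 x y]
  | disj i j ih1 ih2 => intro x y; simp [ST, Fml.syms, ih1 x y, ih2 x y]
  | impl i j ih1 ih2 => intro x y; simp [ST, Fml.syms, ih1 (x+2) (y+2), ih2 (x+2) (y+2)]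
  | all v i ih => intro x y; simp [ST, Fml.syms, ih (x+2) (y+2)]
  | ex v i ih => intro x y; simp [ST, Fml.syms, ih x y]

lemma symsST_conj (i j : IFml) (x : ℕ) :
    (ST (.conj i j) x).syms = (ST i x).syms ∪ (ST j x).syms := rfl

lemma symsST_disj (i j : IFml) (x : ℕ) :
    (ST (.disj i j) x).syms = (ST i x).syms ∪ (ST j x).syms := rfl

lemma symsST_impl (i j : IFml) (x : ℕ) :
    (ST (.impl i j) x).syms = {Sym.R} ∪ ((ST i 1).syms ∪ (ST j 1).syms) := by
  show ({Sym.R} : Finset Sym) ∪ ((ST i (x+2)).syms ∪ (ST j (x+2)).syms) = _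
  rw [symsST_indep i (x+2) 1, symsST_indep j (x+2) 1]

lemma symsST_ex (w : ℕ) (i : IFml) (x : ℕ) :
    (ST (.ex w i) x).syms = {Sym.E} ∪ (ST i 1).syms := by
  show ({Sym.E} : Finset Sym) ∪ (ST i x).syms = _
  rw [symsST_indep i x 1]

lemma symsST_all (w : ℕ) (i : IFml) (x : ℕ) :
    (ST (.all w i) x).syms = ({Sym.R} ∪ {Sym.E}) ∪ (ST i 1).syms := by
  show (({Sym.R} : Finset Sym) ∪ {Sym.E}) ∪ (ST i (x+2)).syms = _
  rw [symsST_indep i (x+2) 1]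

lemma symsST_fls (x : ℕ) : (ST .fls x).syms = ∅ := rfl

lemma symsST_itrue (x : ℕ) : (ST itrue x).syms = {Sym.R} := by
  simp [itrue, symsST_impl, symsST_fls]

/-- Free variables of ST: either the world variable or an even variable that is
free in the x=1 version. -/
lemma freeST_mem : ∀ (i : IFml) (x y v : ℕ), x % 2 = 1 → y % 2 = 1 →
    v ∈ (ST i x).free → v = x ∨ (v % 2 = 0 ∧ v ∈ (ST i y).free) := by
  intro i
  induction i with
  | atom n m args =>
    intro x y v hx hy hv
    simp only [ST, Fml.free, Finset.mem_image, Finset.mem_univ, true_and] at hv ⊢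
    obtain ⟨k, -, hk⟩ := Finset.mem_image.1 hv
    rcases Fin.eq_zero_or_eq_succ k with rfl | ⟨k', rfl⟩
    · left; exact hk.symm
    · right
      change 2 * args k' = v at hk
      exact ⟨by omega, Finset.mem_image.2 ⟨k'.succ, Finset.mem_univ _, hk⟩⟩
  | fls =>
    intro x y v hx hy hv
    simp only [ST, Fml.free, Finset.mem_insert, Finset.mem_singleton] at hv
    left; rcases hv with h | h <;> exact h
  | conj i j ih1 ih2 =>
    intro x y v hx hy hv
    simp only [ST, Fml.free, Finset.mem_union] at hv ⊢
    rcases hv with h | h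
    · rcases ih1 x y v hx hy h with h' | ⟨he, h'⟩
      · exact Or.inl h'
      · exact Or.inr ⟨he, Or.inl h'⟩
    · rcases ih2 x y v hx hy h with h' | ⟨he, h'⟩
      · exact Or.inl h'
      · exact Or.inr ⟨he, Or.inr h'⟩
  | disj i j ih1 ih2 =>
    intro x y v hx hy hv
    simp only [ST, Fml.free, Finset.mem_union] at hv ⊢
    rcases hv with h | h
    · rcases ih1 x y v hx hy h with h' | ⟨he, h'⟩
      · exact Or.inl h'
      · exact Or.inr ⟨he, Or.inl h'⟩
    · rcases ih2 x y v hx hy h with h' | ⟨he, h'⟩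
      · exact Or.inl h'
      · exact Or.inr ⟨he, Or.inr h'⟩
  | impl i j ih1 ih2 =>
    intro x y v hx hy hv
    simp only [ST, Fml.free, Finset.mem_erase, Finset.mem_union] at hv ⊢
    obtain ⟨hne, hv⟩ := hv
    rcases hv with h | h | h
    · replace h := (mem_image_fin2 _ _ _).1 h
      rcases h with rfl | rfl
      · exact Or.inl rfl
      · exact absurd rfl hne
    · rcases ih1 (x+2) (y+2) v (by omega) (by omega) h with h' | ⟨he, h'⟩
      · exact absurd h' hne
      · exact Or.inr ⟨he, by omega, Or.inr (Or.inl h')⟩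
    · rcases ih2 (x+2) (y+2) v (by omega) (by omega) h with h' | ⟨he, h'⟩
      · exact absurd h' hne
      · exact Or.inr ⟨he, by omega, Or.inr (Or.inr h')⟩
  | all w i ih =>
    intro x y v hx hy hv
    simp only [ST, Fml.free, Finset.mem_erase, Finset.mem_union] at hv ⊢
    obtain ⟨hne2, hne3, hv⟩ := hv
    rcases hv with (h | h) | h
    · replace h := (mem_image_fin2 _ _ _).1 h
      rcases h with rfl | rfl
      · exact Or.inl rfl
      · exact absurd rfl hne2
    · replace h := (mem_image_fin2 _ _ _).1 h
      rcases h with rfl | rfl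
      · exact absurd rfl hne2
      · exact absurd rfl hne3
    · rcases ih (x+2) (y+2) v (by omega) (by omega) h with h' | ⟨he, h'⟩
      · exact absurd h' hne2
      · exact Or.inr ⟨he, by omega, hne3, Or.inr h'⟩
  | ex w i ih =>
    intro x y v hx hy hv
    simp only [ST, Fml.free, Finset.mem_erase, Finset.mem_union] at hv ⊢
    obtain ⟨hne, hv⟩ := hv
    rcases hv with h | h
    · replace h := (mem_image_fin2 _ _ _).1 h
      rcases h with rfl | rfl
      · exact Or.inl rfl
      · exact absurd rfl hne
    · rcases ih x y v hx hy h with h' | ⟨he, h'⟩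
      · exact Or.inl h'
      · exact Or.inr ⟨he, hne, Or.inr h'⟩

end IPC
namespace IPC

lemma freeOK_fls (l : ℕ) : FreeOK l (ST .fls 1) := by
  intro v hv
  simp only [ST, Fml.free, Finset.mem_insert, Finset.mem_singleton] at hv
  left; rcases hv with h | h <;> exact h

lemma freeOK_conj {l : ℕ} {i j : IFml} (h1 : FreeOK l (ST i 1)) (h2 : FreeOK l (ST j 1)) :
    FreeOK l (ST (.conj i j) 1) := by
  intro v hv
  simp only [ST, Fml.free, Finset.mem_union] at hv
  rcases hv with h | h
  · exact h1 v h
  · exact h2 v h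

lemma freeOK_disj {l : ℕ} {i j : IFml} (h1 : FreeOK l (ST i 1)) (h2 : FreeOK l (ST j 1)) :
    FreeOK l (ST (.disj i j) 1) := by
  intro v hv
  simp only [ST, Fml.free, Finset.mem_union] at hv
  rcases hv with h | h
  · exact h1 v h
  · exact h2 v h

lemma freeOK_impl {l : ℕ} {i j : IFml} (h1 : FreeOK l (ST i 1)) (h2 : FreeOK l (ST j 1)) :
    FreeOK l (ST (.impl i j) 1) := by
  intro v hv
  simp only [ST, Fml.free, Finset.mem_erase, Finset.mem_union] at hv
  obtain ⟨hne, hv⟩ := hv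
  rcases hv with h | h | h
  · replace h := (mem_image_fin2 _ _ _).1 h
    rcases h with rfl | rfl
    · exact Or.inl rfl
    · exact absurd rfl hne
  · rcases freeST_mem i 3 1 v (by omega) (by omega) h with h' | ⟨_, h'⟩
    · exact absurd h' hne
    · exact h1 v h'
  · rcases freeST_mem j 3 1 v (by omega) (by omega) h with h' | ⟨_, h'⟩
    · exact absurd h' hne
    · exact h2 v h'

lemma freeOK_itrue (l : ℕ) : FreeOK l (ST itrue 1) :=
  freeOK_impl (freeOK_fls l) (freeOK_fls l)

lemma freeOK_ex {l : ℕ} {i : IFml} (h1 : FreeOK (l + 1) (ST i 1)) :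
    FreeOK l (ST (.ex l i) 1) := by
  intro v hv
  simp only [ST, Fml.free, Finset.mem_erase, Finset.mem_union] at hv
  obtain ⟨hne, hv⟩ := hv
  rcases hv with h | h
  · replace h := (mem_image_fin2 _ _ _).1 h
    rcases h with rfl | rfl
    · exact Or.inl rfl
    · exact absurd rfl hne
  · rcases h1 v h with h' | ⟨k, hk, rfl⟩
    · exact Or.inl h'
    · refine Or.inr ⟨k, ?_, rfl⟩
      rcases Nat.lt_succ_iff_lt_or_eq.1 hk with h' | rfl
      · exact h'
      · exact absurd rfl hne

lemma freeOK_all {l : ℕ} {i : IFml} (h1 : FreeOK (l + 1) (ST i 1)) :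
    FreeOK l (ST (.all l i) 1) := by
  intro v hv
  simp only [ST, Fml.free, Finset.mem_erase, Finset.mem_union] at hv
  obtain ⟨hne3, hne2l, hv⟩ := hv
  rcases hv with (h | h) | h
  · replace h := (mem_image_fin2 _ _ _).1 h
    rcases h with rfl | rfl
    · exact Or.inl rfl
    · exact absurd rfl hne3
  · replace h := (mem_image_fin2 _ _ _).1 h
    rcases h with rfl | rfl
    · exact absurd rfl hne3
    · exact absurd rfl hne2l
  · rcases freeST_mem i 3 1 v (by omega) (by omega) h with h' | ⟨_, h'⟩
    · exact absurd h' hne3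
    · rcases h1 v h' with h'' | ⟨k, hk, rfl⟩
      · exact Or.inl h''
      · refine Or.inr ⟨k, ?_, rfl⟩
        rcases Nat.lt_succ_iff_lt_or_eq.1 hk with h'' | rfl
        · exact h''
        · exact absurd rfl hne2l

lemma freeOK_iconjL {l : ℕ} {L : List IFml} (h : ∀ j ∈ L, FreeOK l (ST j 1)) :
    FreeOK l (ST (iconjL L) 1) := by
  induction L with
  | nil => exact freeOK_itrue l
  | cons j L ih =>
    exact freeOK_conj (h j (List.mem_cons_self)) (ih (fun j' hj' => h j' (List.mem_cons_of_mem _ hj')))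

lemma freeOK_idisjL {l : ℕ} {L : List IFml} (h : ∀ j ∈ L, FreeOK l (ST j 1)) :
    FreeOK l (ST (idisjL L) 1) := by
  induction L with
  | nil => exact freeOK_fls l
  | cons j L ih =>
    exact freeOK_disj (h j (List.mem_cons_self)) (ih (fun j' hj' => h j' (List.mem_cons_of_mem _ hj')))

lemma symsOK_iconjL {Θ : Set Sym} (hR : Sym.R ∈ Θ) {L : List IFml}
    (h : ∀ j ∈ L, ↑(ST j 1).syms ⊆ Θ) : ↑(ST (iconjL L) 1).syms ⊆ Θ := by
  induction L with
  | nil =>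
    intro s hs
    rw [Finset.mem_coe, show iconjL [] = itrue from rfl, symsST_itrue, Finset.mem_singleton] at hs
    exact hs ▸ hR
  | cons j L ih =>
    intro s hs
    rw [Finset.mem_coe] at hs
    rw [show iconjL (j :: L) = .conj j (iconjL L) from rfl, symsST_conj, Finset.mem_union] at hs
    rcases hs with hs | hs
    · exact h j (List.mem_cons_self) hs
    · exact ih (fun j' hj' => h j' (List.mem_cons_of_mem _ hj')) hs

lemma symsOK_idisjL {Θ : Set Sym} {L : List IFml}
    (h : ∀ j ∈ L, ↑(ST j 1).syms ⊆ Θ) : ↑(ST (idisjL L) 1).syms ⊆ Θ := by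
  induction L with
  | nil =>
    intro s hs
    rw [Finset.mem_coe, show idisjL [] = IFml.fls from rfl, symsST_fls] at hs
    exact absurd hs (Finset.notMem_empty s)
  | cons j L ih =>
    intro s hs
    rw [Finset.mem_coe] at hs
    rw [show idisjL (j :: L) = .disj j (idisjL L) from rfl, symsST_disj, Finset.mem_union] at hs
    rcases hs with hs | hs
    · exact h j (List.mem_cons_self) hs
    · exact ih (fun j' hj' => h j' (List.mem_cons_of_mem _ hj')) hs


lemma rel_congr (α : Model) (s : Sym) (v w : Fin s.arity → α.D) (h : ∀ i, v i = w i) :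
    α.rel s v ↔ α.rel s w := iff_of_eq (congrArg _ (funext h))

lemma matrix2_eq {X : Type} (F G : ℕ → X) (p q p' q' : ℕ) (h1 : F p = G p') (h2 : F q = G q') :
    ∀ i : Fin 2, F (![p, q] i) = G (![p', q'] i) := by
  intro i; fin_cases i <;> simpa

lemma matrix2_map {X : Type} (f : ℕ → X) (p q : ℕ) :
    ∀ i : Fin 2, f (![p, q] i) = ![f p, f q] i := by
  intro i; fin_cases i <;> simp

lemma evalR_iff (α : Model) (p q : ℕ) (f : ℕ → α.D) :
    (Fml.atom .R ![p, q]).eval α f ↔ relR α (f p) (f q) := by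
  show α.rel Sym.R _ ↔ α.rel Sym.R ![f p, f q]
  exact rel_congr α .R _ _ (matrix2_map f p q)

lemma evalE_iff (α : Model) (p q : ℕ) (f : ℕ → α.D) :
    (Fml.atom .E ![p, q]).eval α f ↔ relE α (f p) (f q) := by
  show α.rel Sym.E _ ↔ α.rel Sym.E ![f p, f q]
  exact rel_congr α .E _ _ (matrix2_map f p q)

lemma cons_eq {X : Type} {n : ℕ} (F G : ℕ → X) (x y : ℕ) (as : Fin n → ℕ)
    (h0 : F x = G y) (h : ∀ i, F (as i) = G (as i)) :
    ∀ i : Fin (n+1), F ((Fin.cons x as : Fin (n+1) → ℕ) i) =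
      G ((Fin.cons y as : Fin (n+1) → ℕ) i) := by
  intro i
  rcases Fin.eq_zero_or_eq_succ i with rfl | ⟨j, rfl⟩
  · simpa
  · simp only [Fin.cons_succ]; exact h j

/-- Renaming the world variable of a standard translation. -/
lemma evalST_rename (α : Model) : ∀ (i : IFml) (x y : ℕ) (f g : ℕ → α.D),
    x % 2 = 1 → y % 2 = 1 → f x = g y → (∀ v, v % 2 = 0 → f v = g v) →
    ((ST i x).eval α f ↔ (ST i y).eval α g) := by
  intro i
  induction i with
  | atom n m args =>
    intro x y f g hx hy hxy hev
    show α.rel (Sym.P n m) _ ↔ α.rel (Sym.P n m) _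
    exact rel_congr α (.P n m) _ _
      (cons_eq f g x y (fun i => 2 * args i) hxy (fun i => hev (2 * args i) (Nat.mul_mod_right 2 _)))
  | fls =>
    intro x y f g hx hy hxy hev
    simp [ST, Fml.eval]
  | conj i j ih1 ih2 =>
    intro x y f g hx hy hxy hev
    simp only [ST, Fml.eval]
    rw [ih1 x y f g hx hy hxy hev, ih2 x y f g hx hy hxy hev]
  | disj i j ih1 ih2 =>
    intro x y f g hx hy hxy hev
    simp only [ST, Fml.eval]
    rw [ih1 x y f g hx hy hxy hev, ih2 x y f g hx hy hxy hev]
  | impl i j ih1 ih2 =>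
    intro x y f g hx hy hxy hev
    simp only [ST, Fml.eval]
    apply forall_congr'
    intro d
    have hagree : ∀ v, v % 2 = 0 →
        Function.update f (x+2) d v = Function.update g (y+2) d v := by
      intro v hv
      rw [Function.update_of_ne (by omega : v ≠ x+2), Function.update_of_ne (by omega : v ≠ y+2)]
      exact hev v hv
    have hworld : Function.update f (x+2) d (x+2) = Function.update g (y+2) d (y+2) := by
      simp
    have e1 : (α.rel Sym.R fun i => Function.update f (x+2) d (![x, x+2] i)) ↔
        (α.rel Sym.R fun i => Function.update g (y+2) d (![y, y+2] i)) := by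
      refine rel_congr α .R _ _ (matrix2_eq _ _ _ _ _ _ ?_ ?_)
      · rw [Function.update_of_ne (by omega : x ≠ x + 2),
          Function.update_of_ne (by omega : y ≠ y + 2)]
        exact hxy
      · exact hworld
    rw [e1, ih1 (x+2) (y+2) _ _ (by omega) (by omega) hworld hagree,
        ih2 (x+2) (y+2) _ _ (by omega) (by omega) hworld hagree]
  | all w i ih =>
    intro x y f g hx hy hxy hev
    simp only [ST, Fml.eval]
    apply forall_congr'
    intro d
    apply forall_congr'
    intro e
    set f' := Function.update (Function.update f (x+2) d) (2*w) e with hf'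
    set g' := Function.update (Function.update g (y+2) d) (2*w) e with hg'
    have hagree : ∀ v, v % 2 = 0 → f' v = g' v := by
      intro v hv
      rcases eq_or_ne v (2*w) with rfl | hvw
      · simp [hf', hg']
      · rw [hf', hg', Function.update_of_ne hvw, Function.update_of_ne hvw,
          Function.update_of_ne (by omega : v ≠ x+2), Function.update_of_ne (by omega : v ≠ y+2)]
        exact hev v hv
    have hworld : f' (x+2) = g' (y+2) := by
      rw [hf', hg', Function.update_of_ne (by omega : x+2 ≠ 2*w),
        Function.update_of_ne (by omega : y+2 ≠ 2*w)]
      simp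
    have hfx : f' x = g' y := by
      rw [hf', hg', Function.update_of_ne (by omega : x ≠ 2*w),
        Function.update_of_ne (by omega : y ≠ 2*w),
        Function.update_of_ne (by omega : x ≠ x+2), Function.update_of_ne (by omega : y ≠ y+2)]
      exact hxy
    have e1 : (α.rel Sym.R fun i => f' (![x, x+2] i)) ↔
        (α.rel Sym.R fun i => g' (![y, y+2] i)) :=
      rel_congr α .R _ _ (matrix2_eq _ _ _ _ _ _ hfx hworld)
    have e2 : (α.rel Sym.E fun i => f' (![x+2, 2*w] i)) ↔
        (α.rel Sym.E fun i => g' (![y+2, 2*w] i)) :=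
      rel_congr α .E _ _ (matrix2_eq _ _ _ _ _ _ hworld (hagree (2*w) (by omega)))
    rw [e1, e2, ih (x+2) (y+2) f' g' (by omega) (by omega) hworld hagree]
  | ex w i ih =>
    intro x y f g hx hy hxy hev
    simp only [ST, Fml.eval]
    apply exists_congr
    intro d
    set f' := Function.update f (2*w) d with hf'
    set g' := Function.update g (2*w) d with hg'
    have hagree : ∀ v, v % 2 = 0 → f' v = g' v := by
      intro v hv
      rcases eq_or_ne v (2*w) with rfl | hvw
      · simp [hf', hg']
      · rw [hf', hg', Function.update_of_ne hvw, Function.update_of_ne hvw]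
        exact hev v hv
    have hworld : f' x = g' y := by
      rw [hf', hg', Function.update_of_ne (by omega : x ≠ 2*w),
        Function.update_of_ne (by omega : y ≠ 2*w)]
      exact hxy
    have e2 : (α.rel Sym.E fun i => f' (![x, 2*w] i)) ↔
        (α.rel Sym.E fun i => g' (![y, 2*w] i)) :=
      rel_congr α .E _ _ (matrix2_eq _ _ _ _ _ _ hworld (hagree (2*w) (by omega)))
    rw [e2, ih x y f' g' hx hy hworld hagree]

end IPC
namespace IPC

section Ultra

variable {ι : Type} (U : Ultrafilter ι) (M : ι → Model)

def uSetoid : Setoid (∀ i, (M i).D) where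
  r x y := ∀ᶠ i in ↑U, x i = y i
  iseqv := ⟨fun _ => Filter.Eventually.of_forall (fun _ => rfl),
    fun h => h.mono (fun _ e => e.symm),
    fun h1 h2 => (h1.and h2).mono (fun _ e => e.1.trans e.2)⟩

noncomputable def UProd : Model where
  D := Quotient (uSetoid U M)
  ne := ⟨Quotient.mk _ (fun i => Classical.choice (M i).ne)⟩
  rel := fun s v => ∀ᶠ i in ↑U, (M i).rel s (fun k => (v k).out i)

lemma out_spec (x : ∀ i, (M i).D) :
    ∀ᶠ i in ↑U, (Quotient.mk (uSetoid U M) x).out i = x i :=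
  Quotient.exact (Quotient.out_eq (Quotient.mk (uSetoid U M) x))

/-- Łoś's theorem. -/
theorem los : ∀ (φ : Fml) (f : ℕ → (UProd U M).D),
    φ.eval (UProd U M) f ↔ ∀ᶠ i in ↑U, φ.eval (M i) (fun v => (f v).out i) := by
  intro φ
  induction φ with
  | atom s args => intro f; exact Iff.rfl
  | eq v w =>
    intro f
    show f v = f w ↔ _
    exact (Quotient.out_equiv_out (s := uSetoid U M)).symm
  | fls =>
    intro f
    show False ↔ _
    constructor
    · exact False.elim
    · intro h
      obtain ⟨i, hi⟩ := h.exists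
      exact hi
  | neg φ ih =>
    intro f
    show ¬ _ ↔ _
    rw [ih f]
    exact (Ultrafilter.eventually_not).symm
  | conj φ ψ ih1 ih2 =>
    intro f
    show _ ∧ _ ↔ _
    rw [ih1 f, ih2 f]
    exact (Filter.eventually_and).symm
  | disj φ ψ ih1 ih2 =>
    intro f
    show _ ∨ _ ↔ _
    rw [ih1 f, ih2 f]
    exact (Ultrafilter.eventually_or).symm
  | impl φ ψ ih1 ih2 =>
    intro f
    show (_ → _) ↔ _
    rw [ih1 f, ih2 f]
    exact (Ultrafilter.eventually_imp).symm
  | all v φ ih =>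
    intro f
    constructor
    · intro h
      by_contra hnot
      rw [← Ultrafilter.eventually_not] at hnot
      have hex : ∀ᶠ i in ↑U, ∃ d, ¬ φ.eval (M i)
          (Function.update (fun w => (f w).out i) v d) := by
        apply hnot.mono
        intro i hi
        simp only [Fml.eval] at hi
        push_neg at hi
        exact hi
      classical
      have hskolem : ∀ i, ∃ d : (M i).D,
          (∃ d', ¬ φ.eval (M i) (Function.update (fun w => (f w).out i) v d')) →
          ¬ φ.eval (M i) (Function.update (fun w => (f w).out i) v d) := by
        intro i
        by_cases hh : ∃ d', ¬ φ.eval (M i) (Function.update (fun w => (f w).out i) v d')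
        · exact ⟨hh.choose, fun _ => hh.choose_spec⟩
        · exact ⟨Classical.choice (M i).ne, fun hc => absurd hc hh⟩
      choose g hgs using hskolem
      have hg : ∀ᶠ i in ↑U, ¬ φ.eval (M i)
          (Function.update (fun w => (f w).out i) v (g i)) :=
        hex.mono (fun i hi => hgs i hi)
      have h2 := (ih (Function.update f v (Quotient.mk _ g))).1 (h _)
      have hout := out_spec U M g
      have h3 : ∀ᶠ i in ↑U, φ.eval (M i)
          (Function.update (fun w => (f w).out i) v (g i)) := by
        apply (h2.and hout).mono
        rintro i ⟨e1, e2⟩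
        have heq : (fun w => ((Function.update f v (Quotient.mk (uSetoid U M) g)) w).out i) =
            Function.update (fun w => (f w).out i) v (g i) := by
          funext w
          rcases eq_or_ne w v with rfl | hw
          · rw [Function.update_self]; exact (congrArg (fun q : Quotient (uSetoid U M) => q.out i) (Function.update_self w (Quotient.mk (uSetoid U M) g) f)).trans e2
          · rw [Function.update_of_ne hw]; exact congrArg (fun q : Quotient (uSetoid U M) => q.out i) (Function.update_of_ne hw _ f)
        rwa [heq] at e1
      obtain ⟨i, hi1, hi2⟩ := (hg.and h3).exists
      exact hi1 hi2
    · intro h d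
      rw [ih]
      apply h.mono
      intro i hi
      have heq : (fun w => ((Function.update f v d) w).out i) =
          Function.update (fun w => (f w).out i) v (d.out i) := by
        funext w
        rcases eq_or_ne w v with rfl | hw
        · simp
        · simp [Function.update_of_ne hw]
      rw [heq]
      exact hi (d.out i)
  | ex v φ ih =>
    intro f
    constructor
    · rintro ⟨d, hd⟩
      have h2 := (ih (Function.update f v d)).1 hd
      apply h2.mono
      intro i hi
      refine ⟨d.out i, ?_⟩
      have heq : (fun w => ((Function.update f v d) w).out i) =
          Function.update (fun w => (f w).out i) v (d.out i) := by
        funext w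
        rcases eq_or_ne w v with rfl | hw
        · simp
        · simp [Function.update_of_ne hw]
      rwa [heq] at hi
    · intro h
      classical
      have hskolem : ∀ i, ∃ d : (M i).D,
          (∃ d', φ.eval (M i) (Function.update (fun w => (f w).out i) v d')) →
          φ.eval (M i) (Function.update (fun w => (f w).out i) v d) := by
        intro i
        by_cases hh : ∃ d', φ.eval (M i) (Function.update (fun w => (f w).out i) v d')
        · exact ⟨hh.choose, fun _ => hh.choose_spec⟩
        · exact ⟨Classical.choice (M i).ne, fun hc => absurd hc hh⟩
      choose g hgs using hskolem
      have hg : ∀ᶠ i in ↑U, φ.eval (M i)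
          (Function.update (fun w => (f w).out i) v (g i)) := by
        apply h.mono
        intro i hi
        apply hgs i
        obtain ⟨d, hd⟩ := hi
        exact ⟨d, hd⟩
      refine ⟨Quotient.mk _ g, ?_⟩
      rw [ih]
      have hout := out_spec U M g
      apply (hg.and hout).mono
      rintro i ⟨e1, e2⟩
      have heq : (fun w => ((Function.update f v (Quotient.mk (uSetoid U M) g)) w).out i) =
          Function.update (fun w => (f w).out i) v (g i) := by
        funext w
        rcases eq_or_ne w v with rfl | hw
        · rw [Function.update_self]; exact (congrArg (fun q : Quotient (uSetoid U M) => q.out i) (Function.update_self w (Quotient.mk (uSetoid U M) g) f)).trans e2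
        · rw [Function.update_of_ne hw]; exact congrArg (fun q : Quotient (uSetoid U M) => q.out i) (Function.update_of_ne hw _ f)
      rw [heq]
      exact e1

end Ultra

/-- Compactness via ultraproducts. -/
theorem compactness (Γ : Set Fml)
    (h : ∀ S : Finset Fml, ↑S ⊆ Γ → ∃ (M : Model) (f : ℕ → M.D), ∀ ψ ∈ S, ψ.eval M f) :
    ∃ (M : Model) (f : ℕ → M.D), ∀ ψ ∈ Γ, ψ.eval M f := by
  classical
  have hch : ∀ S : Finset Fml, ∃ (M : Model) (f : ℕ → M.D),
      ∀ ψ ∈ S.filter (· ∈ Γ), ψ.eval M f := by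
    intro S
    apply h
    intro ψ hψ
    rw [Finset.mem_coe, Finset.mem_filter] at hψ
    exact hψ.2
  choose Mod asg hMod using hch
  haveI : Filter.NeBot (Filter.atTop : Filter (Finset Fml)) := Filter.atTop_neBot
  let U : Ultrafilter (Finset Fml) := Ultrafilter.of (Filter.atTop : Filter (Finset Fml))
  have hUle : (U : Filter (Finset Fml)) ≤ Filter.atTop := Ultrafilter.of_le _
  refine ⟨UProd U Mod, fun v => Quotient.mk _ (fun S => asg S v), ?_⟩
  intro ψ hψ
  rw [los U Mod ψ (fun v => Quotient.mk _ (fun S => asg S v))]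
  have h1 : ∀ᶠ S in (U : Filter (Finset Fml)), ψ ∈ S := by
    have := Filter.eventually_atTop.2
      ⟨({ψ} : Finset Fml), fun S hS => hS (Finset.mem_singleton_self ψ)⟩
    exact this.filter_mono hUle
  have h2 : ∀ᶠ S in ↑U, ∀ v ∈ ψ.free,
      (Quotient.mk (uSetoid U Mod) (fun S => asg S v)).out S = asg S v :=
    (Filter.eventually_all_finset _).2 (fun v _ => out_spec U Mod _)
  apply (h1.and h2).mono
  rintro S ⟨hS1, hS2⟩
  rw [eval_congr (Mod S) ψ _ (asg S) (fun v hv => hS2 v hv)]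
  exact hMod S ψ (Finset.mem_filter.2 ⟨hS1, hψ⟩)

noncomputable def UPow (M : Model) (U : Ultrafilter ℕ) : Model := UProd U (fun _ => M)

noncomputable def diag (M : Model) (U : Ultrafilter ℕ) (a : M.D) : (UPow M U).D :=
  Quotient.mk _ (fun _ => a)

/-- The diagonal embedding is elementary. -/
lemma eval_diag (M : Model) (U : Ultrafilter ℕ) (ψ : Fml) (f : ℕ → M.D) :
    ψ.eval M f ↔ ψ.eval (UPow M U) (fun v => diag M U (f v)) := by
  rw [show (ψ.eval (UPow M U) (fun v => diag M U (f v))) =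
    (ψ.eval (UProd U (fun _ => M)) (fun v => diag M U (f v))) from rfl, los U (fun _ => M) ψ (fun v => diag M U (f v))]
  have h2 : ∀ᶠ i in ↑U, ∀ v ∈ ψ.free, (diag M U (f v)).out i = f v :=
    (Filter.eventually_all_finset _).2 (fun v _ => out_spec U (fun _ => M) _)
  constructor
  · intro h
    apply h2.mono
    intro i hi
    exact (eval_congr M ψ _ f (fun v hv => hi v hv)).2 h
  · intro h
    obtain ⟨i, hi1, hi2⟩ := (h.and h2).exists
    exact (eval_congr M ψ _ f (fun v hv => hi2 v hv)).1 hi1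

/-- Realizing countable types over finitely many new variables. -/
def MySat (N : Model) : Prop :=
  ∀ (f : ℕ → N.D) (V : Finset ℕ) (e : ℕ → Fml),
    (∀ n : ℕ, ∃ g : ℕ → N.D, (∀ v ∉ V, g v = f v) ∧ ∀ k < n, (e k).eval N g) →
    ∃ g : ℕ → N.D, (∀ v ∉ V, g v = f v) ∧ ∀ k : ℕ, (e k).eval N g

lemma eval_conjList (α : Model) (L : List Fml) (f : ℕ → α.D) :
    (conjList L).eval α f ↔ ∀ ψ ∈ L, ψ.eval α f := by
  induction L with
  | nil => simp [conjList, Fml.eval]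
  | cons ψ L ih =>
    show (ψ.eval α f ∧ (conjList L).eval α f) ↔ _
    rw [ih]
    simp

lemma eval_exList (α : Model) (L : List ℕ) (ψ : Fml) (f : ℕ → α.D) :
    (List.foldr Fml.ex ψ L).eval α f ↔
      ∃ g : ℕ → α.D, (∀ v ∉ L, g v = f v) ∧ ψ.eval α g := by
  induction L generalizing f with
  | nil =>
    constructor
    · intro h
      exact ⟨f, fun v _ => rfl, h⟩
    · rintro ⟨g, hg, h⟩
      have : g = f := funext (fun v => hg v (List.not_mem_nil))
      rwa [this] at h
  | cons w L ih =>
    show (∃ d, (List.foldr Fml.ex ψ L).eval α (Function.update f w d)) ↔ _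
    constructor
    · rintro ⟨d, hd⟩
      obtain ⟨g, hg1, hg2⟩ := (ih _).1 hd
      refine ⟨g, ?_, hg2⟩
      intro v hv
      rw [List.mem_cons, not_or] at hv
      rw [hg1 v hv.2, Function.update_of_ne hv.1]
    · rintro ⟨g, hg1, hg2⟩
      refine ⟨g w, (ih _).2 ⟨g, ?_, hg2⟩⟩
      intro v hv
      rcases eq_or_ne v w with rfl | hne
      · simp
      · rw [Function.update_of_ne hne]
        exact hg1 v (by simp [hne, hv])

/-- The hyperfilter ultrapower realizes countable types. -/
theorem mySat_upow (M : Model) : MySat (UPow M (Filter.hyperfilter ℕ)) := by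
  classical
  intro f V e hfin
  set χ : ℕ → Fml := fun n => conjList ((List.range n).map e) with hχ
  have chi_eval : ∀ (α : Model) (g : ℕ → α.D) (n : ℕ),
      (χ n).eval α g ↔ ∀ k < n, (e k).eval α g := by
    intro α g n
    rw [hχ, eval_conjList]
    constructor
    · intro h k hk
      exact h (e k) (List.mem_map_of_mem (f := e) (List.mem_range.2 hk))
    · intro h ψ hψ
      obtain ⟨k, hk, rfl⟩ := List.mem_map.1 hψ
      exact h k (List.mem_range.1 hk)
  have chi_mono : ∀ (α : Model) (g : ℕ → α.D) (n n' : ℕ), n ≤ n' →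
      (χ n').eval α g → (χ n).eval α g := by
    intro α g n n' hle h
    rw [chi_eval] at h ⊢
    exact fun k hk => h k (lt_of_lt_of_le hk hle)
  have hex : ∀ n, (List.foldr Fml.ex (χ n) V.toList).eval (UPow M (Filter.hyperfilter ℕ)) f := by
    intro n
    obtain ⟨g, hg1, hg2⟩ := hfin n
    refine (eval_exList _ V.toList (χ n) f).2 ⟨g, ?_, (chi_eval _ g n).2 hg2⟩
    intro v hv
    exact hg1 v (fun hc => hv (Finset.mem_toList.2 hc))
  have hA : ∀ n, ∀ᶠ i in ↑(Filter.hyperfilter ℕ),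
      (List.foldr Fml.ex (χ n) V.toList).eval M (fun v => (f v).out i) :=
    fun n => (los (Filter.hyperfilter ℕ) (fun _ => M) _ f).1 (hex n)
  set P : ℕ → ℕ → Prop := fun i n => ∀ m ≤ n,
      (List.foldr Fml.ex (χ m) V.toList).eval M (fun v => (f v).out i) with hP
  have hPae : ∀ n, ∀ᶠ i in ↑(Filter.hyperfilter ℕ), P i n := by
    intro n
    have := (Filter.eventually_all_finset (Finset.range (n+1))).2
      (fun m (_ : m ∈ Finset.range (n+1)) => hA m)
    apply this.mono
    intro i hi m hm
    exact hi m (Finset.mem_range.2 (Nat.lt_succ_of_le hm))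
  have hP0 : ∀ i, P i 0 := by
    intro i m hm
    rw [Nat.le_zero] at hm
    subst hm
    refine (eval_exList M V.toList (χ 0) _).2 ⟨(fun v => (f v).out i), fun _ _ => rfl, ?_⟩
    rw [chi_eval]
    intro k hk
    exact absurd hk (Nat.not_lt_zero k)
  have hPm : ∀ i, P i (Nat.findGreatest (P i) i) :=
    fun i => Nat.findGreatest_spec (Nat.zero_le i) (hP0 i)
  have hwit : ∀ i, ∃ h : ℕ → M.D, (∀ v ∉ V.toList, h v = (f v).out i) ∧
      (χ (Nat.findGreatest (P i) i)).eval M h := by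
    intro i
    exact (eval_exList M V.toList (χ (Nat.findGreatest (P i) i)) _).1 (hPm i _ le_rfl)
  choose hw hw1 hw2 using hwit
  refine ⟨fun v => if v ∈ V then Quotient.mk _ (fun i => hw i v) else f v, ?_, ?_⟩
  · intro v hv
    simp [hv]
  · intro k
    set g : ℕ → (UPow M (Filter.hyperfilter ℕ)).D :=
      fun v => if v ∈ V then Quotient.mk _ (fun i => hw i v) else f v with hgdef
    have hkey : (χ (k+1)).eval (UPow M (Filter.hyperfilter ℕ)) g := by
      rw [show ((χ (k+1)).eval (UPow M (Filter.hyperfilter ℕ)) g) =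
        ((χ (k+1)).eval (UProd (Filter.hyperfilter ℕ) (fun _ => M)) g) from rfl,
        los (Filter.hyperfilter ℕ) (fun _ => M) (χ (k+1)) g]
      have e1 : ∀ᶠ i in ↑(Filter.hyperfilter ℕ), (k+1) ≤ i := by
        apply Filter.mem_hyperfilter_of_finite_compl
        have hc : {i : ℕ | (k+1) ≤ i}ᶜ = {i : ℕ | i < k+1} := by
          ext i; simp [Nat.not_le]
        rw [hc]
        exact Set.finite_lt_nat (k+1)
      have e2 := hPae (k+1)
      have e3 : ∀ᶠ i in ↑(Filter.hyperfilter ℕ), ∀ v ∈ (χ (k+1)).free,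
          (v ∈ V → (g v).out i = hw i v) := by
        apply (Filter.eventually_all_finset _).2
        intro v _
        by_cases hv : v ∈ V
        · have hgv : g v = Quotient.mk (uSetoid (Filter.hyperfilter ℕ) (fun _ => M))
              (fun i => hw i v) := by
            rw [hgdef]; simp [hv]; rfl
          rw [hgv]
          apply (out_spec (Filter.hyperfilter ℕ) (fun _ => M) _).mono
          intro i hi _
          exact hi
        · exact Filter.Eventually.of_forall (fun i h => absurd h hv)
      apply ((e1.and e2).and e3).mono
      rintro i ⟨⟨hi1, hi2⟩, hi3⟩
      have hmi : (k+1) ≤ Nat.findGreatest (P i) i := Nat.le_findGreatest hi1 hi2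
      have hχm : (χ (k+1)).eval M (hw i) :=
        chi_mono M (hw i) (k+1) (Nat.findGreatest (P i) i) hmi (hw2 i)
      rw [eval_congr M (χ (k+1)) _ (hw i) ?_]
      · exact hχm
      intro v hv
      by_cases hvV : v ∈ V
      · exact hi3 v hv hvV
      · have hgv : g v = f v := by rw [hgdef]; simp [hvV]
        rw [hgv, (hw1 i v (fun hc => hvV (Finset.mem_toList.1 hc))).symm]
    exact (chi_eval _ g (k+1)).1 hkey k (Nat.lt_succ_self k)

/-- `IFml` is countable. -/
private def encI : IFml → ℕ
  | .atom n m args => Nat.pair 0 (Nat.pair n (Nat.pair m (Encodable.encode (List.ofFn args))))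
  | .fls => Nat.pair 1 0
  | .conj i j => Nat.pair 2 (Nat.pair (encI i) (encI j))
  | .disj i j => Nat.pair 3 (Nat.pair (encI i) (encI j))
  | .impl i j => Nat.pair 4 (Nat.pair (encI i) (encI j))
  | .all v i => Nat.pair 5 (Nat.pair v (encI i))
  | .ex v i => Nat.pair 6 (Nat.pair v (encI i))

private lemma encI_inj : Function.Injective encI := by
  intro a
  induction a with
  | atom n m args =>
    intro b h
    cases b <;> (try exact absurd (Nat.pair_eq_pair.1 h).1 (by decide))
    rename_i n' m' args'
    obtain ⟨-, h2⟩ := Nat.pair_eq_pair.1 h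
    obtain ⟨rfl, h3⟩ := Nat.pair_eq_pair.1 h2
    obtain ⟨rfl, h4⟩ := Nat.pair_eq_pair.1 h3
    have h5 := Encodable.encode_injective h4
    rw [List.ofFn_inj] at h5
    rw [h5]
  | fls =>
    intro b h
    cases b <;> (try exact absurd (Nat.pair_eq_pair.1 h).1 (by decide))
    rfl
  | conj i j ih1 ih2 =>
    intro b h
    cases b <;> (try exact absurd (Nat.pair_eq_pair.1 h).1 (by decide))
    rename_i i' j'
    obtain ⟨-, h2⟩ := Nat.pair_eq_pair.1 h
    obtain ⟨h3, h4⟩ := Nat.pair_eq_pair.1 h2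
    rw [ih1 h3, ih2 h4]
  | disj i j ih1 ih2 =>
    intro b h
    cases b <;> (try exact absurd (Nat.pair_eq_pair.1 h).1 (by decide))
    rename_i i' j'
    obtain ⟨-, h2⟩ := Nat.pair_eq_pair.1 h
    obtain ⟨h3, h4⟩ := Nat.pair_eq_pair.1 h2
    rw [ih1 h3, ih2 h4]
  | impl i j ih1 ih2 =>
    intro b h
    cases b <;> (try exact absurd (Nat.pair_eq_pair.1 h).1 (by decide))
    rename_i i' j'
    obtain ⟨-, h2⟩ := Nat.pair_eq_pair.1 h
    obtain ⟨h3, h4⟩ := Nat.pair_eq_pair.1 h2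
    rw [ih1 h3, ih2 h4]
  | all v i ih =>
    intro b h
    cases b <;> (try exact absurd (Nat.pair_eq_pair.1 h).1 (by decide))
    rename_i v' i'
    obtain ⟨-, h2⟩ := Nat.pair_eq_pair.1 h
    obtain ⟨h3, h4⟩ := Nat.pair_eq_pair.1 h2
    rw [h3, ih h4]
  | ex v i ih =>
    intro b h
    cases b <;> (try exact absurd (Nat.pair_eq_pair.1 h).1 (by decide))
    rename_i v' i'
    obtain ⟨-, h2⟩ := Nat.pair_eq_pair.1 h
    obtain ⟨h3, h4⟩ := Nat.pair_eq_pair.1 h2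
    rw [h3, ih h4]

instance : Countable IFml := ⟨⟨encI, encI_inj⟩⟩

end IPC
namespace IPC

lemma ST_impl_one (i j : IFml) : ST (.impl i j) 1 =
    .all 3 (.impl (.atom .R ![1, 3]) (.impl (ST i 3) (ST j 3))) := rfl

lemma ST_ex_one (w : ℕ) (i : IFml) : ST (.ex w i) 1 =
    .ex (2*w) (.conj (.atom .E ![1, 2*w]) (ST i 1)) := rfl

lemma ST_all_one (w : ℕ) (i : IFml) : ST (.all w i) 1 =
    .all 3 (.all (2*w) (.impl (.conj (.atom .R ![1, 3]) (.atom .E ![3, 2*w])) (ST i 3))) := rfl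

lemma symsST_atom (l m : ℕ) (args : Fin l → ℕ) :
    (ST (.atom l m args) 1).syms = {Sym.P l m} := rfl

lemma freeOK_atomST (l m : ℕ) (args : Fin l → ℕ) (hargs : ∀ k, args k < l) :
    FreeOK l (ST (.atom l m args) 1) := by
  intro v hv
  simp only [ST, Fml.free, Finset.mem_image, Finset.mem_univ, true_and] at hv
  obtain ⟨k, -, hk⟩ := Finset.mem_image.1 hv
  rcases Fin.eq_zero_or_eq_succ k with rfl | ⟨j, rfl⟩
  · left; exact hk.symm
  · right
    change 2 * args j = v at hk
    exact ⟨args j, hargs j, hk.symm⟩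

lemma sat_atom_iff (α : Model) (a : α.D) (os : List α.D) (m : ℕ) :
    Sat α a os (ST (.atom os.length m (fun k => k.val)) 1) ↔
      atomSat α (.P os.length m) a os := by
  have hpt : ∀ (f : ℕ → α.D), f 1 = a → (∀ k : Fin os.length, f (2 * k.val) = os.get k) →
      ∀ (h : (Sym.P os.length m).arity = os.length + 1) (i : Fin (Sym.P os.length m).arity),
      f ((Fin.cons 1 (fun j : Fin os.length => 2 * (fun k : Fin os.length => k.val) j) :
          Fin (os.length + 1) → ℕ) i) = (a :: os).get (Fin.cast h i) := by
    intro f h1 h2 h i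
    rcases Fin.eq_zero_or_eq_succ i with rfl | ⟨j, rfl⟩
    · exact h1
    · change f (2 * j.val) = _
      rw [h2 j]
      simp [List.get_eq_getElem, Fin.coe_cast]; rfl
  constructor
  · intro hS
    refine ⟨rfl, ?_⟩
    have hev := hS (canon α a os) (canon_one α a os) (fun k => canon_two_mul α a os k)
    exact (rel_congr α (.P os.length m) _ _
      (hpt (canon α a os) (canon_one α a os) (fun k => canon_two_mul α a os k) rfl)).1 hev
  · rintro ⟨h, hrel⟩ f h1 h2
    exact (rel_congr α (.P os.length m) _ _ (hpt f h1 h2 h)).2 hrel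

end IPC
namespace IPC

instance : Nonempty IFml := ⟨.fls⟩

lemma back_lemma (Θ : Set Sym) (hR : Sym.R ∈ Θ) (α β : Model) (hsα : MySat α)
    (a' : α.D) (os : List α.D) (c' : β.D) (os' : List β.D)
    (hlen : os.length = os'.length) (hIT : ITLe Θ α a' os β c' os')
    (c'' : β.D) (hc : relR β c' c'') :
    ∃ a'', relR α a' a'' ∧ ITLe Θ β c'' os' α a'' os ∧ ITLe Θ α a'' os β c'' os' := by
  classical
  obtain ⟨u, hu⟩ := exists_surjective_nat IFml
  set Cond : IFml → Prop :=
    fun i => ↑(ST i 1).syms ⊆ Θ ∧ FreeOK os.length (ST i 1) with hCdef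
  set e : ℕ → Fml := fun k =>
    if k = 0 then .atom .R ![1, 3]
    else if Cond (u (k-1)) then
      (if Sat β c'' os' (ST (u (k-1)) 1) then ST (u (k-1)) 3 else .neg (ST (u (k-1)) 3))
    else .eq 1 1 with hedef
  have he0 : e 0 = .atom .R ![1, 3] := by rw [hedef]; simp
  have heS : ∀ k, e (k+1) = if Cond (u k) then
      (if Sat β c'' os' (ST (u k) 1) then ST (u k) 3 else .neg (ST (u k) 3))
      else .eq 1 1 := by
    intro k
    rw [hedef]
    simp
  have hfin : ∀ n, ∃ g, (∀ v ∉ ({3} : Finset ℕ), g v = canon α a' os v) ∧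
      ∀ k < n, (e k).eval α g := by
    intro n
    set posL : List IFml := (List.range n).filterMap (fun k =>
      if k = 0 then none
      else if Cond (u (k-1)) ∧ Sat β c'' os' (ST (u (k-1)) 1) then some (u (k-1))
      else none) with hposdef
    set negL : List IFml := (List.range n).filterMap (fun k =>
      if k = 0 then none
      else if Cond (u (k-1)) ∧ ¬ Sat β c'' os' (ST (u (k-1)) 1) then some (u (k-1))
      else none) with hnegdef
    have hposmem : ∀ j ∈ posL, Cond j ∧ Sat β c'' os' (ST j 1) := by
      intro j hj
      rw [hposdef, List.mem_filterMap] at hj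
      obtain ⟨k, _, hkj⟩ := hj
      by_cases h0 : k = 0
      · rw [if_pos h0] at hkj; simp at hkj
      · rw [if_neg h0] at hkj
        by_cases hC : Cond (u (k-1)) ∧ Sat β c'' os' (ST (u (k-1)) 1)
        · rw [if_pos hC] at hkj
          obtain rfl := Option.some_injective _ hkj
          exact hC
        · rw [if_neg hC] at hkj; simp at hkj
    have hnegmem : ∀ j ∈ negL, Cond j ∧ ¬ Sat β c'' os' (ST j 1) := by
      intro j hj
      rw [hnegdef, List.mem_filterMap] at hj
      obtain ⟨k, _, hkj⟩ := hj
      by_cases h0 : k = 0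
      · rw [if_pos h0] at hkj; simp at hkj
      · rw [if_neg h0] at hkj
        by_cases hC : Cond (u (k-1)) ∧ ¬ Sat β c'' os' (ST (u (k-1)) 1)
        · rw [if_pos hC] at hkj
          obtain rfl := Option.some_injective _ hkj
          exact hC
        · rw [if_neg hC] at hkj; simp at hkj
    set IMP : IFml := .impl (iconjL posL) (idisjL negL) with hIMP
    have hsyms : ↑(ST IMP 1).syms ⊆ Θ := by
      intro s hs
      rw [Finset.mem_coe, hIMP, symsST_impl, Finset.mem_union, Finset.mem_union] at hs
      rcases hs with hs | hs | hs
      · rw [Finset.mem_singleton] at hs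
        exact hs ▸ hR
      · exact symsOK_iconjL hR (fun j hj => (hposmem j hj).1.1) hs
      · exact symsOK_idisjL (fun j hj => (hnegmem j hj).1.1) hs
    have hfree : FreeOK os.length (ST IMP 1) := by
      rw [hIMP]
      exact freeOK_impl (freeOK_iconjL (fun j hj => (hposmem j hj).1.2))
        (freeOK_idisjL (fun j hj => (hnegmem j hj).1.2))
    have hnotβ : ¬ Sat β c' os' (ST IMP 1) := by
      intro hS
      have hfree' : FreeOK os'.length (ST IMP 1) := hlen ▸ hfree
      have hev := (sat_iff_eval_canon β c' os' _ hfree').1 hS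
      rw [hIMP, ST_impl_one] at hev
      have h3 := hev c''
      set q := Function.update (canon β c' os') 3 c'' with hqdef
      have hq3 : q 3 = c'' := by rw [hqdef, Function.update_self]
      have hqev : ∀ v, v % 2 = 0 → q v = canon β c'' os' v := by
        intro v hv
        rw [hqdef, Function.update_of_ne (by omega)]
        exact canon_even_indep β c' c'' os' v (by omega)
      have hatom : (Fml.atom .R ![1, 3]).eval β q := by
        rw [evalR_iff, hqdef, Function.update_of_ne (by omega), Function.update_self,
          canon_one]
        exact hc
      have hpos : (ST (iconjL posL) 3).eval β q := by
        rw [evalST_rename β (iconjL posL) 3 1 q (canon β c'' os') (by norm_num) (by norm_num)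
          (by rw [hq3, canon_one]) hqev]
        rw [evalST_iconjL]
        intro j hj
        exact (sat_iff_eval_canon β c'' os' _ (hlen ▸ (hposmem j hj).1.2)).1 (hposmem j hj).2
      have hneg := h3 hatom hpos
      rw [evalST_rename β (idisjL negL) 3 1 q (canon β c'' os') (by norm_num) (by norm_num)
        (by rw [hq3, canon_one]) hqev] at hneg
      rw [evalST_idisjL] at hneg
      obtain ⟨j, hj, hevj⟩ := hneg
      exact (hnegmem j hj).2
        ((sat_iff_eval_canon β c'' os' _ (hlen ▸ (hnegmem j hj).1.2)).2 hevj)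
    have hnotα : ¬ Sat α a' os (ST IMP 1) := fun hcon => hnotβ (hIT IMP hsyms hfree hcon)
    have hnev : ¬ (ST IMP 1).eval α (canon α a' os) :=
      fun he => hnotα ((sat_iff_eval_canon α a' os _ hfree).2 he)
    rw [hIMP, ST_impl_one] at hnev
    simp only [Fml.eval] at hnev
    push_neg at hnev
    obtain ⟨d, hdA, hdB, hdC⟩ := hnev
    refine ⟨Function.update (canon α a' os) 3 d, ?_, ?_⟩
    · intro v hv
      rw [Finset.mem_singleton] at hv
      rw [Function.update_of_ne hv]
    · intro k hk
      match k with
      | 0 =>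
        rw [he0]
        exact hdA
      | (m+1) =>
        rw [heS m]
        split_ifs with hC hS'
        · have hmem : u m ∈ posL := by
            rw [hposdef, List.mem_filterMap]
            refine ⟨m+1, List.mem_range.2 hk, ?_⟩
            rw [if_neg (Nat.succ_ne_zero m)]
            simp only [Nat.add_sub_cancel]
            rw [if_pos ⟨hC, hS'⟩]
          exact (evalST_iconjL α posL 3 _).1 hdB (u m) hmem
        · have hmem : u m ∈ negL := by
            rw [hnegdef, List.mem_filterMap]
            refine ⟨m+1, List.mem_range.2 hk, ?_⟩
            rw [if_neg (Nat.succ_ne_zero m)]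
            simp only [Nat.add_sub_cancel]
            rw [if_pos ⟨hC, hS'⟩]
          intro hcon
          exact hdC ((evalST_idisjL α negL 3 _).2 ⟨u m, hmem, hcon⟩)
        · show Function.update (canon α a' os) 3 d 1 = Function.update (canon α a' os) 3 d 1
          rfl
  obtain ⟨g, hgV, hgall⟩ := hsα (canon α a' os) {3} e hfin
  have hg1 : g 1 = a' := by
    rw [hgV 1 (by simp), canon_one]
  have hga : relR α a' (g 3) := by
    have h0 := hgall 0
    rw [he0, evalR_iff] at h0
    rwa [hg1] at h0
  have hgev : ∀ v, v % 2 = 0 → g v = canon α (g 3) os v := by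
    intro v hv
    rw [hgV v (by simp; omega)]
    exact canon_even_indep α a' (g 3) os v (by omega)
  refine ⟨g 3, hga, ?_, ?_⟩
  · intro i hsy hfr hSat
    obtain ⟨k, rfl⟩ := hu i
    have hfr' : FreeOK os.length (ST (u k) 1) := by rw [hlen]; exact hfr
    have hC : Cond (u k) := ⟨hsy, hfr'⟩
    have hk1 := hgall (k+1)
    rw [heS k, if_pos hC, if_pos hSat] at hk1
    have hk2 := (evalST_rename α (u k) 3 1 g (canon α (g 3) os) (by norm_num) (by norm_num)
      (by rw [canon_one]) hgev).1 hk1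
    exact (sat_iff_eval_canon α (g 3) os _ hfr').2 hk2
  · intro i hsy hfr hSat
    obtain ⟨k, rfl⟩ := hu i
    have hC : Cond (u k) := ⟨hsy, hfr⟩
    by_contra hno
    have hk1 := hgall (k+1)
    rw [heS k, if_pos hC, if_neg hno] at hk1
    apply hk1
    have hev1 := (sat_iff_eval_canon α (g 3) os _ hfr).1 hSat
    exact (evalST_rename α (u k) 1 3 (canon α (g 3) os) g (by norm_num) (by norm_num)
      (by rw [canon_one]) (fun v hv => (hgev v hv).symm)).1 hev1

end IPC
namespace IPC

lemma exi_lemma (Θ : Set Sym) (hR : Sym.R ∈ Θ) (hE : Sym.E ∈ Θ) (α β : Model) (hsβ : MySat β)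
    (a' : α.D) (os : List α.D) (c' : β.D) (os' : List β.D)
    (hlen : os.length = os'.length) (hIT : ITLe Θ α a' os β c' os')
    (b'' : α.D) (hb : relE α a' b'') :
    ∃ d'', relE β c' d'' ∧ ITLe Θ α a' (os ++ [b'']) β c' (os' ++ [d'']) := by
  classical
  obtain ⟨u, hu⟩ := exists_surjective_nat IFml
  set Cond : IFml → Prop :=
    fun i => ↑(ST i 1).syms ⊆ Θ ∧ FreeOK (os.length + 1) (ST i 1) with hCdef
  set e : ℕ → Fml := fun k =>
    if k = 0 then .atom .E ![1, 2 * os.length]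
    else if Cond (u (k-1)) ∧ Sat α a' (os ++ [b'']) (ST (u (k-1)) 1) then ST (u (k-1)) 1
    else .eq 1 1 with hedef
  have he0 : e 0 = .atom .E ![1, 2 * os.length] := by rw [hedef]; simp
  have heS : ∀ k, e (k+1) = if Cond (u k) ∧ Sat α a' (os ++ [b'']) (ST (u k) 1)
      then ST (u k) 1 else .eq 1 1 := by
    intro k
    rw [hedef]
    simp
  have hlapp : (os ++ [b'']).length = os.length + 1 := by simp
  have hfin : ∀ n, ∃ g, (∀ v ∉ ({2 * os.length} : Finset ℕ), g v = canon β c' os' v) ∧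
      ∀ k < n, (e k).eval β g := by
    intro n
    set posL : List IFml := (List.range n).filterMap (fun k =>
      if k = 0 then none
      else if Cond (u (k-1)) ∧ Sat α a' (os ++ [b'']) (ST (u (k-1)) 1) then some (u (k-1))
      else none) with hposdef
    have hposmem : ∀ j ∈ posL, Cond j ∧ Sat α a' (os ++ [b'']) (ST j 1) := by
      intro j hj
      rw [hposdef, List.mem_filterMap] at hj
      obtain ⟨k, _, hkj⟩ := hj
      by_cases h0 : k = 0
      · rw [if_pos h0] at hkj; simp at hkj
      · rw [if_neg h0] at hkj
        by_cases hC : Cond (u (k-1)) ∧ Sat α a' (os ++ [b'']) (ST (u (k-1)) 1)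
        · rw [if_pos hC] at hkj
          obtain rfl := Option.some_injective _ hkj
          exact hC
        · rw [if_neg hC] at hkj; simp at hkj
    set iex : IFml := .ex os.length (iconjL posL) with hiex
    have hsyms : ↑(ST iex 1).syms ⊆ Θ := by
      intro s hs
      rw [Finset.mem_coe, hiex, symsST_ex, Finset.mem_union] at hs
      rcases hs with hs | hs
      · rw [Finset.mem_singleton] at hs
        exact hs ▸ hE
      · exact symsOK_iconjL hR (fun j hj => (hposmem j hj).1.1) hs
    have hfreeC : FreeOK (os ++ [b'']).length (ST (iconjL posL) 1) := by
      rw [hlapp]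
      exact freeOK_iconjL (fun j hj => (hposmem j hj).1.2)
    have hfree : FreeOK os.length (ST iex 1) := by
      rw [hiex]
      exact freeOK_ex (freeOK_iconjL (fun j hj => (hposmem j hj).1.2))
    have hSatConj : Sat α a' (os ++ [b'']) (ST (iconjL posL) 1) := by
      rw [sat_iff_eval_canon α a' (os ++ [b'']) _ hfreeC, evalST_iconjL]
      intro j hj
      exact (sat_iff_eval_canon α a' (os ++ [b'']) _
        (by rw [hlapp]; exact (hposmem j hj).1.2)).1 (hposmem j hj).2
    have hSex : Sat α a' os (ST iex 1) := by
      rw [sat_iff_eval_canon α a' os _ hfree, hiex, ST_ex_one]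
      refine ⟨b'', ?_, ?_⟩
      · rw [evalE_iff, Function.update_of_ne (by omega), Function.update_self, canon_one]
        exact hb
      · rw [show Function.update (canon α a' os) (2 * os.length) b'' =
          canon α a' (os ++ [b'']) from (canon_append α a' os b'').symm]
        exact (sat_iff_eval_canon α a' (os ++ [b'']) _ hfreeC).1 hSatConj
    have hSatβ := hIT iex hsyms hfree hSex
    rw [sat_iff_eval_canon β c' os' _ (hlen ▸ hfree), hiex, ST_ex_one] at hSatβ
    obtain ⟨d, hdE, hdC⟩ := hSatβ
    refine ⟨Function.update (canon β c' os') (2 * os.length) d, ?_, ?_⟩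
    · intro v hv
      rw [Finset.mem_singleton] at hv
      rw [Function.update_of_ne hv]
    · intro k hk
      match k with
      | 0 =>
        rw [he0]
        exact hdE
      | (m+1) =>
        rw [heS m]
        split_ifs with hC
        · have hmem : u m ∈ posL := by
            rw [hposdef, List.mem_filterMap]
            refine ⟨m+1, List.mem_range.2 hk, ?_⟩
            rw [if_neg (Nat.succ_ne_zero m)]
            simp only [Nat.add_sub_cancel]
            rw [if_pos hC]
          exact (evalST_iconjL β posL 1 _).1 hdC (u m) hmem
        · show Function.update (canon β c' os') (2 * os.length) d 1 =
            Function.update (canon β c' os') (2 * os.length) d 1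
          rfl
  obtain ⟨g, hgV, hgall⟩ := hsβ (canon β c' os') {2 * os.length} e hfin
  have hg1 : g 1 = c' := by
    rw [hgV 1 (by simp; omega), canon_one]
  have hgd : relE β c' (g (2 * os.length)) := by
    have h0 := hgall 0
    rw [he0, evalE_iff] at h0
    rwa [hg1] at h0
  have hgfun : g = canon β c' (os' ++ [g (2 * os.length)]) := by
    funext v
    rcases eq_or_ne v (2 * os.length) with rfl | hv
    · rw [canon_append, show 2 * os'.length = 2 * os.length by rw [hlen],
        Function.update_self]
    · rw [hgV v (by simpa using hv), canon_append,
        Function.update_of_ne (by rw [← hlen]; exact hv)]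
  refine ⟨g (2 * os.length), hgd, ?_⟩
  intro i hsy hfr hSat
  obtain ⟨k, rfl⟩ := hu i
  have hfr' : FreeOK (os.length + 1) (ST (u k) 1) := by rw [← hlapp]; exact hfr
  have hC : Cond (u k) := ⟨hsy, hfr'⟩
  have hk1 := hgall (k+1)
  rw [heS k, if_pos ⟨hC, hSat⟩] at hk1
  rw [hgfun] at hk1
  refine (sat_iff_eval_canon β c' (os' ++ [g (2 * os.length)]) _ ?_).2 hk1
  rw [show (os' ++ [g (2 * os.length)]).length = os.length + 1 by simp [← hlen]]
  exact hfr'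

lemma uni_lemma (Θ : Set Sym) (hR : Sym.R ∈ Θ) (hE : Sym.E ∈ Θ) (α β : Model) (hsα : MySat α)
    (a' : α.D) (os : List α.D) (c' : β.D) (os' : List β.D)
    (hlen : os.length = os'.length) (hIT : ITLe Θ α a' os β c' os')
    (c'' d'' : β.D) (hc : relR β c' c'') (hd : relE β c'' d'') :
    ∃ a'' b'', relR α a' a'' ∧ relE α a'' b'' ∧
      ITLe Θ α a'' (os ++ [b'']) β c'' (os' ++ [d'']) := by
  classical
  obtain ⟨u, hu⟩ := exists_surjective_nat IFml
  set Cond : IFml → Prop :=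
    fun i => ↑(ST i 1).syms ⊆ Θ ∧ FreeOK (os.length + 1) (ST i 1) with hCdef
  set e : ℕ → Fml := fun k =>
    if k = 0 then .atom .R ![1, 3]
    else if k = 1 then .atom .E ![3, 2 * os.length]
    else if Cond (u (k-2)) ∧ ¬ Sat β c'' (os' ++ [d'']) (ST (u (k-2)) 1)
      then .neg (ST (u (k-2)) 3)
    else .eq 1 1 with hedef
  have he0 : e 0 = .atom .R ![1, 3] := by rw [hedef]; simp
  have he1 : e 1 = .atom .E ![3, 2 * os.length] := by rw [hedef]; simp
  have heS : ∀ k, e (k+2) = if Cond (u k) ∧ ¬ Sat β c'' (os' ++ [d'']) (ST (u k) 1)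
      then .neg (ST (u k) 3) else .eq 1 1 := by
    intro k
    rw [hedef]
    simp
  have hlapp' : (os' ++ [d'']).length = os.length + 1 := by simp [← hlen]
  have hfin : ∀ n, ∃ g, (∀ v ∉ ({3, 2 * os.length} : Finset ℕ), g v = canon α a' os v) ∧
      ∀ k < n, (e k).eval α g := by
    intro n
    set negL : List IFml := (List.range n).filterMap (fun k =>
      if k ≤ 1 then none
      else if Cond (u (k-2)) ∧ ¬ Sat β c'' (os' ++ [d'']) (ST (u (k-2)) 1) then some (u (k-2))
      else none) with hnegdef
    have hnegmem : ∀ j ∈ negL, Cond j ∧ ¬ Sat β c'' (os' ++ [d'']) (ST j 1) := by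
      intro j hj
      rw [hnegdef, List.mem_filterMap] at hj
      obtain ⟨k, _, hkj⟩ := hj
      by_cases h0 : k ≤ 1
      · rw [if_pos h0] at hkj; simp at hkj
      · rw [if_neg h0] at hkj
        by_cases hC : Cond (u (k-2)) ∧ ¬ Sat β c'' (os' ++ [d'']) (ST (u (k-2)) 1)
        · rw [if_pos hC] at hkj
          obtain rfl := Option.some_injective _ hkj
          exact hC
        · rw [if_neg hC] at hkj; simp at hkj
    set iall : IFml := .all os.length (idisjL negL) with hiall
    have hsyms : ↑(ST iall 1).syms ⊆ Θ := by
      intro s hs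
      rw [Finset.mem_coe, hiall, symsST_all, Finset.mem_union, Finset.mem_union] at hs
      rcases hs with (hs | hs) | hs
      · rw [Finset.mem_singleton] at hs
        exact hs ▸ hR
      · rw [Finset.mem_singleton] at hs
        exact hs ▸ hE
      · exact symsOK_idisjL (fun j hj => (hnegmem j hj).1.1) hs
    have hfree : FreeOK os.length (ST iall 1) := by
      rw [hiall]
      exact freeOK_all (freeOK_idisjL (fun j hj => (hnegmem j hj).1.2))
    have hnotβ : ¬ Sat β c' os' (ST iall 1) := by
      intro hS
      have hev := (sat_iff_eval_canon β c' os' _ (hlen ▸ hfree)).1 hS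
      rw [hiall, ST_all_one] at hev
      have h3 := hev c'' d''
      set q := Function.update (Function.update (canon β c' os') 3 c'') (2 * os.length) d''
        with hqdef
      have hq3 : q 3 = c'' := by
        rw [hqdef, Function.update_of_ne (by omega), Function.update_self]
      have hq2l : q (2 * os.length) = d'' := by rw [hqdef, Function.update_self]
      have hq1 : q 1 = c' := by
        rw [hqdef, Function.update_of_ne (by omega), Function.update_of_ne (by omega),
          canon_one]
      have hqev : ∀ v, v % 2 = 0 → q v = canon β c'' (os' ++ [d'']) v := by
        intro v hv
        rcases eq_or_ne v (2 * os.length) with rfl | hv2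
        · rw [hq2l, canon_append, show 2 * os'.length = 2 * os.length by rw [hlen],
            Function.update_self]
        · rw [hqdef, Function.update_of_ne hv2, Function.update_of_ne (by omega),
            canon_append, Function.update_of_ne (by rw [← hlen]; exact hv2)]
          exact canon_even_indep β c' c'' os' v (by omega)
      have hRq : (Fml.atom .R ![1, 3]).eval β q := by
        rw [evalR_iff, hq1, hq3]
        exact hc
      have hEq : (Fml.atom .E ![3, 2 * os.length]).eval β q := by
        rw [evalE_iff, hq3, hq2l]
        exact hd
      have hdis := h3 ⟨hRq, hEq⟩
      rw [evalST_rename β (idisjL negL) 3 1 q (canon β c'' (os' ++ [d''])) (by norm_num)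
        (by norm_num) (by rw [hq3, canon_one]) hqev] at hdis
      rw [evalST_idisjL] at hdis
      obtain ⟨j, hj, hevj⟩ := hdis
      refine (hnegmem j hj).2 ((sat_iff_eval_canon β c'' (os' ++ [d'']) _ ?_).2 hevj)
      rw [hlapp']
      exact (hnegmem j hj).1.2
    have hnotα : ¬ Sat α a' os (ST iall 1) := fun hcon => hnotβ (hIT iall hsyms hfree hcon)
    have hnev : ¬ (ST iall 1).eval α (canon α a' os) :=
      fun he => hnotα ((sat_iff_eval_canon α a' os _ hfree).2 he)
    rw [hiall, ST_all_one] at hnev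
    simp only [Fml.eval] at hnev
    push_neg at hnev
    obtain ⟨dd, ee, ⟨hA, hEe⟩, hnC⟩ := hnev
    refine ⟨Function.update (Function.update (canon α a' os) 3 dd) (2 * os.length) ee,
      ?_, ?_⟩
    · intro v hv
      simp only [Finset.mem_insert, Finset.mem_singleton, not_or] at hv
      rw [Function.update_of_ne hv.2, Function.update_of_ne hv.1]
    · intro k hk
      match k with
      | 0 =>
        rw [he0]
        exact hA
      | 1 =>
        rw [he1]
        exact hEe
      | (m+2) =>
        rw [heS m]
        split_ifs with hC
        · have hmem : u m ∈ negL := by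
            rw [hnegdef, List.mem_filterMap]
            refine ⟨m+2, List.mem_range.2 hk, ?_⟩
            rw [if_neg (by omega)]
            simp only [Nat.add_sub_cancel]
            rw [if_pos hC]
          intro hcon
          exact hnC ((evalST_idisjL α negL 3 _).2 ⟨u m, hmem, hcon⟩)
        · show _ = _
          rfl
  obtain ⟨g, hgV, hgall⟩ := hsα (canon α a' os) {3, 2 * os.length} e hfin
  have hg1 : g 1 = a' := by
    rw [hgV 1 (by simp; omega), canon_one]
  have hga : relR α a' (g 3) := by
    have h0 := hgall 0
    rw [he0, evalR_iff] at h0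
    rwa [hg1] at h0
  have hgb : relE α (g 3) (g (2 * os.length)) := by
    have h1 := hgall 1
    rwa [he1, evalE_iff] at h1
  refine ⟨g 3, g (2 * os.length), hga, hgb, ?_⟩
  intro i hsy hfr hSat
  obtain ⟨k, rfl⟩ := hu i
  have hfr' : FreeOK (os.length + 1) (ST (u k) 1) := by
    rw [show os.length + 1 = (os ++ [g (2 * os.length)]).length by simp]
    exact hfr
  have hC : Cond (u k) := ⟨hsy, hfr'⟩
  by_contra hno
  have hk1 := hgall (k+2)
  rw [heS k, if_pos ⟨hC, hno⟩] at hk1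
  apply hk1
  have hev1 := (sat_iff_eval_canon α (g 3) (os ++ [g (2 * os.length)]) _
    (by rw [show (os ++ [g (2 * os.length)]).length = os.length + 1 by simp]; exact hfr')).1 hSat
  refine (evalST_rename α (u k) 1 3 (canon α (g 3) (os ++ [g (2 * os.length)])) g
    (by norm_num) (by norm_num) (by rw [canon_one]) ?_).1 hev1
  intro v hv
  rcases eq_or_ne v (2 * os.length) with rfl | hv2
  · rw [canon_append, Function.update_self]
  · rw [canon_append, Function.update_of_ne hv2,
      canon_even_indep α (g 3) a' os v (by omega),
      (hgV v (by simp only [Finset.mem_insert, Finset.mem_singleton, not_or]; omega)).symm]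

end IPC
namespace IPC

lemma sat_atom_iff' (α : Model) (a : α.D) (os : List α.D) (l m : ℕ) (hl : l = os.length) :
    Sat α a os (ST (.atom l m (fun k => k.val)) 1) ↔ atomSat α (.P l m) a os := by
  subst hl
  exact sat_atom_iff α a os m

theorem isAsim_ITLe (Θ : Set Sym) (hR : Sym.R ∈ Θ) (hE : Sym.E ∈ Θ) (M N : Model)
    (hsM : MySat M) (hsN : MySat N) :
    IsAsim Θ M N (fun s t a' os c' os' =>
      os.length = os'.length ∧ ITLe Θ (side M N s) a' os (side M N t) c' os') := by
  have hsat : ∀ s : Bool, MySat (side M N s) := by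
    intro s
    cases s
    · exact hsN
    · exact hsM
  constructor
  · rintro s t a' os c' os' ⟨h1, -⟩
    exact h1
  · rintro s t a' os c' os' ⟨hlen, hIT⟩ P hP hPR hPE hsat'
    cases P with
    | R => exact absurd rfl hPR
    | E => exact absurd rfl hPE
    | P nn mm =>
      obtain ⟨harr, hrel⟩ := hsat'
      have hnn : nn = os.length := by simpa [Sym.arity] using harr
      subst hnn
      have hS : Sat (side M N s) a' os (ST (.atom os.length mm (fun k => k.val)) 1) :=
        (sat_atom_iff' _ a' os os.length mm rfl).2 ⟨harr, hrel⟩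
      have hsy : ↑(ST (.atom os.length mm (fun k : Fin os.length => k.val)) 1).syms ⊆ Θ := by
        intro x hx
        rw [Finset.mem_coe, symsST_atom, Finset.mem_singleton] at hx
        exact hx ▸ hP
      have hfr : FreeOK os.length (ST (.atom os.length mm (fun k : Fin os.length => k.val)) 1) :=
        freeOK_atomST os.length mm _ (fun k => k.isLt)
      exact (sat_atom_iff' _ c' os' os.length mm hlen).1 (hIT _ hsy hfr hS)
  · rintro s t a' os c' os' ⟨hlen, hIT⟩ c'' hc
    obtain ⟨a'', h1, h2, h3⟩ := back_lemma Θ hR _ _ (hsat s) a' os c' os' hlen hIT c'' hc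
    exact ⟨a'', h1, ⟨hlen.symm, h2⟩, ⟨hlen, h3⟩⟩
  · rintro s t a' os c' os' ⟨hlen, hIT⟩ b'' hb
    obtain ⟨d'', h1, h2⟩ := exi_lemma Θ hR hE _ _ (hsat t) a' os c' os' hlen hIT b'' hb
    exact ⟨d'', h1, ⟨by simp [hlen], h2⟩⟩
  · rintro s t a' os c' os' ⟨hlen, hIT⟩ c'' d'' hc hd
    obtain ⟨a'', b'', h1, h2, h3⟩ :=
      uni_lemma Θ hR hE _ _ (hsat s) a' os c' os' hlen hIT c'' d'' hc hd
    exact ⟨a'', b'', h1, h2, ⟨by simp [hlen], h3⟩⟩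

lemma sat_transfer (M : Model) (U : Ultrafilter ℕ) (a : M.D) (bs : List M.D) (ψ : Fml)
    (hfr : FreeOK bs.length ψ) :
    Sat M a bs ψ ↔ Sat (UPow M U) (diag M U a) (bs.map (diag M U)) ψ := by
  rw [sat_iff_eval_canon M a bs ψ hfr,
      sat_iff_eval_canon _ _ _ ψ (by rw [List.length_map]; exact hfr),
      eval_diag M U ψ (canon M a bs)]
  apply eval_congr
  intro v hv
  rcases hfr v hv with rfl | ⟨k, hk, rfl⟩
  · rw [canon_one, canon_one]
  · rw [canon_two_mul M a bs ⟨k, hk⟩]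
    rw [show (2 * k) = 2 * (⟨k, by rw [List.length_map]; exact hk⟩ :
      Fin (bs.map (diag M U)).length).val from rfl]
    rw [canon_two_mul (UPow M U) (diag M U a) (bs.map (diag M U))]
    simp [List.getElem_map]

lemma eval_iff_sat_ofFn (M : Model) (f : ℕ → M.D) (n : ℕ) (ψ : Fml) (hfr : FreeOK n ψ) :
    ψ.eval M f ↔ Sat M (f 1) (List.ofFn (fun k : Fin n => f (2 * k.val))) ψ := by
  constructor
  · intro h f' h1 h2
    rw [eval_congr M ψ f' f ?_]
    · exact h
    intro v hv
    rcases hfr v hv with rfl | ⟨k, hk, rfl⟩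
    · rw [h1]
    · have h3 := h2 ⟨k, by simp [hk]⟩
      simp only [List.get_ofFn] at h3
      simpa using h3
  · intro h
    apply h f rfl
    intro i
    simp [List.get_ofFn]

end IPC
namespace IPC

theorem ic_entails (φ : Fml) (n : ℕ) (hfree : FreeOK n φ) (hinv : AsimInvariant φ n) :
    ∀ (M : Model) (f : ℕ → M.D), (∀ ψ ∈ IC φ n, ψ.eval M f) → φ.eval M f := by
  intro M f hIC
  classical
  have hbslen : (List.ofFn (fun k : Fin n => f (2 * k.val))).length = n := by simp
  set Good : Fml → Prop := fun ψ => ψ.syms ⊆ sigOf φ ∧ FreeOK n ψ ∧ IsSTF ψ with hGood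
  set T : Set Fml := insert φ {χ | ∃ ψ, Good ψ ∧ ¬ ψ.eval M f ∧ χ = .neg ψ} with hT
  have hfinT : ∀ S : Finset Fml, ↑S ⊆ T →
      ∃ (M₀ : Model) (f₀ : ℕ → M₀.D), ∀ χ ∈ S, χ.eval M₀ f₀ := by
    intro S hS
    by_contra hcon
    push_neg at hcon
    set js : List IFml := S.toList.filterMap (fun χ =>
      if h : ∃ i : IFml, χ = .neg (ST i 1) ∧ Good (ST i 1) ∧ ¬ (ST i 1).eval M f
      then some h.choose else none) with hjs
    have hjsmem : ∀ j ∈ js, Good (ST j 1) ∧ ¬ (ST j 1).eval M f := by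
      intro j hj
      rw [hjs, List.mem_filterMap] at hj
      obtain ⟨χ, hχ, hkj⟩ := hj
      by_cases h : ∃ i : IFml, χ = .neg (ST i 1) ∧ Good (ST i 1) ∧ ¬ (ST i 1).eval M f
      · rw [dif_pos h] at hkj
        obtain rfl := Option.some_injective _ hkj
        exact ⟨h.choose_spec.2.1, h.choose_spec.2.2⟩
      · rw [dif_neg h] at hkj
        simp at hkj
    have hcover : ∀ χ ∈ S, χ = φ ∨ ∃ j ∈ js, χ = .neg (ST j 1) := by
      intro χ hχ
      have hχT := hS (Finset.mem_coe.2 hχ)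
      rw [hT, Set.mem_insert_iff] at hχT
      rcases hχT with rfl | ⟨ψ, hG, hne, rfl⟩
      · exact Or.inl rfl
      · right
        obtain ⟨i, hi⟩ := hG.2.2
        have hex : ∃ i' : IFml, Fml.neg ψ = .neg (ST i' 1) ∧ Good (ST i' 1) ∧
            ¬ (ST i' 1).eval M f :=
          ⟨i, by rw [hi], by rw [← hi]; exact hG, by rw [← hi]; exact hne⟩
        refine ⟨hex.choose, ?_, hex.choose_spec.1⟩
        rw [hjs, List.mem_filterMap]
        exact ⟨.neg ψ, Finset.mem_toList.2 hχ, by rw [dif_pos hex]⟩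
    have hJsyms : (ST (idisjL js) 1).syms ⊆ sigOf φ := by
      rw [← Finset.coe_subset]
      refine symsOK_idisjL (fun j hj => ?_)
      rw [Finset.coe_subset]
      exact (hjsmem j hj).1.1
    have hJfree : FreeOK n (ST (idisjL js) 1) :=
      freeOK_idisjL (fun j hj => (hjsmem j hj).1.2.1)
    have hJent : EntailsF φ (ST (idisjL js) 1) := by
      intro M' f' hφ'
      by_contra hnJ
      obtain ⟨ψ', hψ'S, hψ'f⟩ := hcon M' f'
      rcases hcover ψ' hψ'S with rfl | ⟨j, hj, rfl⟩
      · exact hψ'f hφ'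
      · apply hψ'f
        intro hcon2
        exact hnJ ((evalST_idisjL M' js 1 f').2 ⟨j, hj, hcon2⟩)
    have hJIC : ST (idisjL js) 1 ∈ IC φ n := ⟨hJsyms, hJfree, ⟨idisjL js, rfl⟩, hJent⟩
    obtain ⟨j, hj, hevj⟩ := (evalST_idisjL M js 1 f).1 (hIC _ hJIC)
    exact (hjsmem j hj).2 hevj
  obtain ⟨M₀, f₀, hM₀⟩ := compactness T hfinT
  have hφ₀ : φ.eval M₀ f₀ := hM₀ φ (by rw [hT]; exact Set.mem_insert _ _)
  have hbs₀len : (List.ofFn (fun k : Fin n => f₀ (2 * k.val))).length = n := by simp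
  have hbase : ITLe ↑(sigOf φ) M₀ (f₀ 1) (List.ofFn (fun k : Fin n => f₀ (2 * k.val)))
      M (f 1) (List.ofFn (fun k : Fin n => f (2 * k.val))) := by
    intro i hsy hfr hSat
    have hfr' : FreeOK n (ST i 1) := hbs₀len ▸ hfr
    have hGood' : Good (ST i 1) := ⟨Finset.coe_subset.1 hsy, hfr', ⟨i, rfl⟩⟩
    by_cases hev : (ST i 1).eval M f
    · exact (eval_iff_sat_ofFn M f n _ hfr').1 hev
    · exfalso
      have hmem : Fml.neg (ST i 1) ∈ T := by
        rw [hT]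
        exact Set.mem_insert_of_mem _ ⟨ST i 1, hGood', hev, rfl⟩
      exact (hM₀ _ hmem) ((eval_iff_sat_ofFn M₀ f₀ n _ hfr').2 hSat)
  have hRmem : Sym.R ∈ (↑(sigOf φ) : Set Sym) := by
    rw [Finset.mem_coe, sigOf, Finset.mem_union]
    right
    simp
  have hEmem : Sym.E ∈ (↑(sigOf φ) : Set Sym) := by
    rw [Finset.mem_coe, sigOf, Finset.mem_union]
    right
    simp
  have hlift : ITLe ↑(sigOf φ) (UPow M₀ (Filter.hyperfilter ℕ))
      (diag M₀ _ (f₀ 1))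
      ((List.ofFn (fun k : Fin n => f₀ (2 * k.val))).map (diag M₀ (Filter.hyperfilter ℕ)))
      (UPow M (Filter.hyperfilter ℕ)) (diag M _ (f 1))
      ((List.ofFn (fun k : Fin n => f (2 * k.val))).map (diag M (Filter.hyperfilter ℕ))) := by
    intro i hsy hfr hSat
    have hfr' : FreeOK n (ST i 1) := by rwa [List.length_map, hbs₀len] at hfr
    have h1 := (sat_transfer M₀ (Filter.hyperfilter ℕ) (f₀ 1) _ _
      (hbs₀len.symm ▸ hfr')).2 hSat
    have h2 := hbase i hsy (hbs₀len.symm ▸ hfr') h1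
    exact (sat_transfer M (Filter.hyperfilter ℕ) (f 1) _ _ (hbslen.symm ▸ hfr')).1 h2
  have hasim := isAsim_ITLe ↑(sigOf φ) hRmem hEmem
    (UPow M₀ (Filter.hyperfilter ℕ)) (UPow M (Filter.hyperfilter ℕ))
    (mySat_upow M₀) (mySat_upow M)
  have happ := hinv ↑(sigOf φ) (Set.Subset.refl _)
    (UPow M₀ (Filter.hyperfilter ℕ)) (UPow M (Filter.hyperfilter ℕ))
    (diag M₀ _ (f₀ 1))
    ((List.ofFn (fun k : Fin n => f₀ (2 * k.val))).map (diag M₀ (Filter.hyperfilter ℕ)))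
    (diag M _ (f 1))
    ((List.ofFn (fun k : Fin n => f (2 * k.val))).map (diag M (Filter.hyperfilter ℕ)))
    (by rw [List.length_map, hbs₀len]) (by rw [List.length_map, hbslen])
    ⟨_, hasim, ⟨(List.length_map _).trans ((hbs₀len.trans hbslen.symm).trans (List.length_map _).symm), hlift⟩⟩
  have hSat₀ : Sat (UPow M₀ (Filter.hyperfilter ℕ)) (diag M₀ _ (f₀ 1))
      ((List.ofFn (fun k : Fin n => f₀ (2 * k.val))).map (diag M₀ (Filter.hyperfilter ℕ))) φ :=
    (sat_transfer M₀ (Filter.hyperfilter ℕ) (f₀ 1) _ φ (hbs₀len.symm ▸ hfree)).1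
      ((eval_iff_sat_ofFn M₀ f₀ n φ hfree).1 hφ₀)
  have hSatM := happ hSat₀
  have hfin := (sat_transfer M (Filter.hyperfilter ℕ) (f 1) _ φ (hbslen.symm ▸ hfree)).2 hSatM
  exact (eval_iff_sat_ofFn M f n φ hfree).2 hfin

end IPC

namespace IPC
/-- asimulation invariance implies equivalence to a standard
x-translation of an intuitionistic formula. -/
theorem equiv_ST_of_asim_invariant (φ : Fml) (n : ℕ) (hfree : FreeOK n φ)
    (hinv : AsimInvariant φ n) : ∃ i : IFml, FmlEquiv φ (ST i 1) := by
  classical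
  have hICent := ic_entails φ n hfree hinv
  have hcomp : ¬ (∀ S : Finset Fml, ↑S ⊆ (IC φ n ∪ {Fml.neg φ} : Set Fml) →
      ∃ (M : Model) (f : ℕ → M.D), ∀ ψ ∈ S, ψ.eval M f) := by
    intro hall
    obtain ⟨M, f, hMf⟩ := compactness _ hall
    have hneg := hMf (.neg φ) (Set.mem_union_right _ rfl)
    exact hneg (hICent M f (fun ψ hψ => hMf ψ (Set.mem_union_left _ hψ)))
  push_neg at hcomp
  obtain ⟨S, hS, hSuns⟩ := hcomp
  set js : List IFml := S.toList.filterMap (fun χ =>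
    if h : ∃ i : IFml, χ = ST i 1 ∧ χ ∈ IC φ n then some h.choose else none) with hjs
  have hjsmem : ∀ j ∈ js, ST j 1 ∈ IC φ n := by
    intro j hj
    rw [hjs, List.mem_filterMap] at hj
    obtain ⟨χ, hχ, hkj⟩ := hj
    by_cases h : ∃ i : IFml, χ = ST i 1 ∧ χ ∈ IC φ n
    · rw [dif_pos h] at hkj
      obtain rfl := Option.some_injective _ hkj
      exact h.choose_spec.1 ▸ h.choose_spec.2
    · rw [dif_neg h] at hkj
      simp at hkj
  have hcover : ∀ χ ∈ S, χ ∈ IC φ n → ∃ j ∈ js, χ = ST j 1 := by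
    intro χ hχ hχIC
    obtain ⟨i, hi⟩ := hχIC.2.2.1
    have hex : ∃ i' : IFml, χ = ST i' 1 ∧ χ ∈ IC φ n := ⟨i, hi, hχIC⟩
    refine ⟨hex.choose, ?_, hex.choose_spec.1⟩
    rw [hjs, List.mem_filterMap]
    exact ⟨χ, Finset.mem_toList.2 hχ, by rw [dif_pos hex]⟩
  refine ⟨iconjL js, ?_⟩
  intro M f
  constructor
  · intro hφ
    rw [evalST_iconjL]
    intro j hj
    exact (hjsmem j hj).2.2.2 M f hφ
  · intro hst
    by_contra hnφ
    obtain ⟨ψ, hψS, hψf⟩ := hSuns M f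
    have hψT := hS (Finset.mem_coe.2 hψS)
    rcases hψT with hψIC | hψeq
    · obtain ⟨j, hj, rfl⟩ := hcover ψ hψS hψIC
      exact hψf ((evalST_iconjL M js 1 f).1 hst j hj)
    · rw [Set.mem_singleton_iff] at hψeq
      subst hψeq
      exact hψf hnφ
end IPC
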